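/- arXiv:0810.0870 — 5 statements merged into one kernel-verified Lean document; each statement's English description precedes it below -/
import Mathlib

section
/- Let X be a real-valued random variable with X ≥ 0 almost surely, mean μ = E[X] and finite variance σ². Suppose there exists ρ ∈ (0,1) such that |X − μ| ≤ ρ(1+μ) almost surely, and suppose the sequence c_n = E[(X−μ)^n]/(n(1+μ)^n), n ≥ 2, is nonnegative and nonincreasing in n. Then log₂(1+μ) − (log₂ e)·σ²/(2(1+μ)²) ≤ E[log₂(1+X)] ≤ log₂(1+μ). -/
open MeasureTheory ProbabilityTheory Real

set_option maxHeartbeats 1000000 in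
lemma alt_series_bounds {a : ℕ → ℝ} (ha : Summable a) (h0 : ∀ k, 0 ≤ a k)
    (hanti : ∀ k, a (k + 1) ≤ a k) :
    0 ≤ ∑' k, (-1 : ℝ) ^ k * a k ∧ (∑' k, (-1 : ℝ) ^ k * a k) ≤ a 0 := by
  have habs : Summable fun k => |(-1 : ℝ) ^ k * a k| := by
    refine ha.congr fun k => ?_
    rw [abs_mul, abs_pow, abs_neg, abs_one, one_pow, one_mul, abs_of_nonneg (h0 k)]
  have hf : Summable fun k => (-1 : ℝ) ^ k * a k := habs.of_abs
  have hinj2 : Function.Injective (fun k : ℕ => 2 * k) := fun m n h => by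
    simpa using h
  have hinj2' : Function.Injective (fun k : ℕ => 2 * k + 1) := fun m n h => by
    simpa using h
  have hea : Summable fun k => a (2 * k) := ha.comp_injective hinj2
  have hoa : Summable fun k => a (2 * k + 1) := ha.comp_injective hinj2'
  have he : Summable fun k => (-1 : ℝ) ^ (2 * k) * a (2 * k) := by
    refine hea.congr fun k => ?_
    rw [pow_mul]; norm_num
  have ho : Summable fun k => (-1 : ℝ) ^ (2 * k + 1) * a (2 * k + 1) := by
    refine hoa.neg.congr fun k => ?_
    rw [pow_succ, pow_mul]; norm_num
  have hsplit := tsum_even_add_odd (f := fun k => (-1 : ℝ) ^ k * a k) he ho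
  have he' : (∑' k, (-1 : ℝ) ^ (2 * k) * a (2 * k)) = ∑' k, a (2 * k) := by
    refine tsum_congr fun k => ?_
    rw [pow_mul]; norm_num
  have ho' : (∑' k, (-1 : ℝ) ^ (2 * k + 1) * a (2 * k + 1)) = -∑' k, a (2 * k + 1) := by
    rw [← tsum_neg]
    refine tsum_congr fun k => ?_
    rw [pow_succ, pow_mul]; norm_num
  rw [he', ho'] at hsplit
  constructor
  · rw [← hsplit]
    have : (∑' k, a (2 * k + 1)) ≤ ∑' k, a (2 * k) :=
      Summable.tsum_le_tsum (fun k => hanti (2 * k)) hoa hea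
    linarith
  · rw [← hsplit]
    have hshift : (∑' k, a (2 * k)) = a 0 + ∑' k, a (2 * (k + 1)) := by
      simpa using Summable.tsum_eq_zero_add hea
    have : (∑' k, a (2 * (k + 1))) ≤ ∑' k, a (2 * k + 1) := by
      refine Summable.tsum_le_tsum (fun k => ?_) (hea.comp_injective (add_left_injective 1)) hoa
      have := hanti (2 * k + 1)
      simpa [two_mul, mul_add] using this
    linarith

set_option maxHeartbeats 2000000 in
/-- Bracketing estimate for the expected rate `E[log₂(1+X)]` of a nonnegative random
variable `X`: lower bound by the second-order truncated Taylor expansion of `log₂(1+x)`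
about the mean `μ`, upper bound by Jensen's inequality. -/
theorem expected_log_rate_bracket
    {Ω : Type*} [MeasureSpace Ω] [IsProbabilityMeasure (ℙ : Measure Ω)]
    (X : Ω → ℝ) (hXmeas : AEMeasurable X ℙ)
    (hX0 : ∀ᵐ ω ∂ℙ, 0 ≤ X ω)
    (hL2 : MemLp X 2 ℙ)
    (μ σ2 : ℝ) (hμ : μ = ∫ ω, X ω ∂ℙ) (hσ2 : σ2 = variance X ℙ)
    (hρ : ∃ ρ : ℝ, ρ ∈ Set.Ioo (0 : ℝ) 1 ∧ ∀ᵐ ω ∂ℙ, |X ω - μ| ≤ ρ * (1 + μ))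
    (hc_nonneg : ∀ n : ℕ, 2 ≤ n →
      0 ≤ (∫ ω, (X ω - μ) ^ n ∂ℙ) / (n * (1 + μ) ^ n))
    (hc_anti : ∀ n : ℕ, 2 ≤ n →
      (∫ ω, (X ω - μ) ^ (n + 1) ∂ℙ) / ((n + 1) * (1 + μ) ^ (n + 1)) ≤
        (∫ ω, (X ω - μ) ^ n ∂ℙ) / (n * (1 + μ) ^ n)) :
    logb 2 (1 + μ) - logb 2 (Real.exp 1) * σ2 / (2 * (1 + μ) ^ 2) ≤
        ∫ ω, logb 2 (1 + X ω) ∂ℙ ∧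
      ∫ ω, logb 2 (1 + X ω) ∂ℙ ≤ logb 2 (1 + μ) := by
  obtain ⟨ρ, ⟨hρ0, hρ1⟩, hbd⟩ := hρ
  have hXint : Integrable X ℙ := hL2.integrable one_le_two
  have hμ0 : 0 ≤ μ := by rw [hμ]; exact integral_nonneg_of_ae hX0
  have h1μ : (0 : ℝ) < 1 + μ := by linarith
  set Y : Ω → ℝ := fun ω => (X ω - μ) / (1 + μ) with hYdef
  have hYm : AEMeasurable Y ℙ := (hXmeas.sub aemeasurable_const).div_const _
  have hYbd : ∀ᵐ ω ∂ℙ, |Y ω| ≤ ρ := by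
    filter_upwards [hbd] with ω h
    rw [hYdef]
    rw [abs_div, abs_of_pos h1μ, div_le_iff₀ h1μ]
    exact h
  have hYint : ∀ n : ℕ, Integrable (fun ω => Y ω ^ n) ℙ := by
    intro n
    refine Integrable.mono' (integrable_const (ρ ^ n))
      ((hYm.pow_const n).aestronglyMeasurable) ?_
    filter_upwards [hYbd] with ω h
    rw [Real.norm_eq_abs, abs_pow]
    exact pow_le_pow_left₀ (abs_nonneg _) h n
  set m : ℕ → ℝ := fun n => ∫ ω, Y ω ^ n ∂ℙ with hmdef
  have hm_abs : ∀ n, |m n| ≤ ρ ^ n := by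
    intro n
    have h1 : |m n| ≤ ∫ ω, |Y ω ^ n| ∂ℙ := by
      have h0 : ‖∫ ω, Y ω ^ n ∂ℙ‖ ≤ ∫ ω, ‖Y ω ^ n‖ ∂ℙ :=
        norm_integral_le_integral_norm _
      simpa [Real.norm_eq_abs] using h0
    refine h1.trans ?_
    have h2 : ∫ ω, |Y ω ^ n| ∂ℙ ≤ ∫ _ω : Ω, ρ ^ n ∂ℙ := by
      refine integral_mono_ae (hYint n).abs (integrable_const _) ?_
      filter_upwards [hYbd] with ω h
      rw [abs_pow]
      exact pow_le_pow_left₀ (abs_nonneg _) h n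
    simpa using h2
  have hm1 : m 1 = 0 := by
    have : ∫ ω, Y ω ^ 1 ∂ℙ = ((∫ ω, X ω ∂ℙ) - μ) / (1 + μ) := by
      simp only [pow_one, hYdef]
      rw [integral_div, integral_sub hXint (integrable_const μ), integral_const]
      simp
    rw [hmdef]
    simp only [this, ← hμ, sub_self, zero_div]
  have hmn : ∀ n, m n = (∫ ω, (X ω - μ) ^ n ∂ℙ) / (1 + μ) ^ n := by
    intro n
    rw [hmdef]
    simp only [hYdef, div_pow]
    exact integral_div _ _
  set a : ℕ → ℝ := fun k => m (k + 2) / ((k : ℝ) + 2) with hadef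
  have hc_eq : ∀ k : ℕ, a k = (∫ ω, (X ω - μ) ^ (k + 2) ∂ℙ) / (((k : ℝ) + 2) * (1 + μ) ^ (k + 2)) := by
    intro k
    rw [hadef]
    simp only [hmn, div_div]
    rw [mul_comm]
  have ha0 : ∀ k, 0 ≤ a k := by
    intro k
    have h := hc_nonneg (k + 2) (by omega)
    rw [hc_eq k]
    convert h using 3
    push_cast
    ring
  have hanti : ∀ k, a (k + 1) ≤ a k := by
    intro k
    have h := hc_anti (k + 2) (by omega)
    rw [hc_eq k, hc_eq (k + 1)]
    convert h using 2 <;> · push_cast; ring_nf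
  have hm_nonneg : ∀ k : ℕ, 0 ≤ m (k + 2) := by
    intro k
    have h := ha0 k
    rw [hadef] at h
    by_contra hneg
    push_neg at hneg
    have : m (k + 2) / ((k : ℝ) + 2) < 0 := div_neg_of_neg_of_pos hneg (by positivity)
    linarith
  have hasum : Summable a := by
    have hgeo : Summable fun k : ℕ => ρ ^ (k + 2) := by
      have h := (summable_geometric_of_lt_one hρ0.le hρ1).mul_left (ρ ^ 2)
      exact h.congr fun k => by rw [← pow_add, Nat.add_comm]
    refine Summable.of_nonneg_of_le ha0 (fun k => ?_) hgeo
    calc a k ≤ m (k + 2) := by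
          rw [hadef]
          exact div_le_self (hm_nonneg k) (by push_cast; linarith [Nat.cast_nonneg (α := ℝ) k])
      _ ≤ |m (k + 2)| := le_abs_self _
      _ ≤ ρ ^ (k + 2) := hm_abs _
  set S : ℝ := ∑' k, (-1 : ℝ) ^ k * a k with hSdef
  obtain ⟨hS0, hSle⟩ := alt_series_bounds hasum ha0 hanti
  have hgeo1 : Summable fun n : ℕ => ρ ^ (n + 1) := by
    have h := (summable_geometric_of_lt_one hρ0.le hρ1).mul_left ρ
    exact h.congr fun n => (pow_succ' ρ n).symm
  have hY1 : ∀ᵐ ω ∂ℙ, 0 < 1 + Y ω := by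
    filter_upwards [hYbd] with ω h
    have := (abs_le.mp h).1
    linarith
  have hXeq : ∀ ω, 1 + X ω = (1 + μ) * (1 + Y ω) := by
    intro ω
    rw [hYdef]
    field_simp
    ring
  set F : ℕ → Ω → ℝ := fun n ω => (-1 : ℝ) ^ n * Y ω ^ (n + 1) / ((n : ℝ) + 1) with hFdef
  have hpt : ∀ᵐ ω ∂ℙ, HasSum (fun n => F n ω)
      (Real.log (1 + X ω) - Real.log (1 + μ)) := by
    filter_upwards [hYbd, hY1] with ω hb h1Y
    have hlt : |(-Y ω)| < 1 := by rw [abs_neg]; exact lt_of_le_of_lt hb hρ1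
    have h := (Real.hasSum_pow_div_log_of_abs_lt_one hlt).neg
    have hfun : (fun n : ℕ => -((-Y ω) ^ (n + 1) / ((n : ℝ) + 1))) = fun n => F n ω := by
      funext n
      rw [hFdef]
      simp only
      rw [neg_pow, pow_succ]
      push_cast
      ring
    rw [hfun, neg_neg, sub_neg_eq_add] at h
    have hlog : Real.log (1 + X ω) = Real.log (1 + μ) + Real.log (1 + Y ω) := by
      rw [hXeq ω, Real.log_mul (ne_of_gt h1μ) (ne_of_gt h1Y)]
    rw [hlog]
    simpa using h
  have hFbd : ∀ n : ℕ, ∀ᵐ ω ∂ℙ, ‖F n ω‖ ≤ ρ ^ (n + 1) := by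
    intro n
    filter_upwards [hYbd] with ω h
    rw [hFdef]
    simp only [Real.norm_eq_abs, abs_div, abs_mul, abs_pow, abs_neg, abs_one, one_pow,
      one_mul]
    have h2 : |(n : ℝ) + 1| = (n : ℝ) + 1 := abs_of_pos (by positivity)
    rw [h2]
    calc |Y ω| ^ (n + 1) / ((n : ℝ) + 1) ≤ |Y ω| ^ (n + 1) :=
          div_le_self (by positivity) (by linarith [Nat.cast_nonneg (α := ℝ) n])
      _ ≤ ρ ^ (n + 1) := pow_le_pow_left₀ (abs_nonneg _) h _
  have hFint : ∀ n, Integrable (F n) ℙ := by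
    intro n
    refine Integrable.mono' (integrable_const (ρ ^ (n + 1)))
      ((((hYm.pow_const (n + 1)).const_mul _).div_const _).aestronglyMeasurable) (hFbd n)
  have hFnorm : Summable fun n => ∫ ω, ‖F n ω‖ ∂ℙ := by
    refine Summable.of_nonneg_of_le
      (fun n => integral_nonneg fun ω => norm_nonneg _) (fun n => ?_) hgeo1
    have h2 : ∫ ω, ‖F n ω‖ ∂ℙ ≤ ∫ _ω : Ω, ρ ^ (n + 1) ∂ℙ :=
      integral_mono_ae (hFint n).norm (integrable_const _) (hFbd n)
    simpa using h2
  have hswap := integral_tsum_of_summable_integral_norm hFint hFnorm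
  have htsum_ae : ∀ᵐ ω ∂ℙ, (∑' n, F n ω) = Real.log (1 + X ω) - Real.log (1 + μ) := by
    filter_upwards [hpt] with ω h using h.tsum_eq
  have hlogbd : ∀ᵐ ω ∂ℙ, ‖Real.log (1 + X ω)‖ ≤
      |Real.log ((1 + μ) * (1 - ρ))| + |Real.log ((1 + μ) * (1 + ρ))| := by
    filter_upwards [hbd] with ω h
    have hab := abs_le.mp h
    have hlopos : 0 < (1 + μ) * (1 - ρ) := by nlinarith
    have hlo : (1 + μ) * (1 - ρ) ≤ 1 + X ω := by nlinarith
    have hhi : 1 + X ω ≤ (1 + μ) * (1 + ρ) := by nlinarith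
    have l1 : Real.log ((1 + μ) * (1 - ρ)) ≤ Real.log (1 + X ω) :=
      Real.log_le_log hlopos hlo
    have l2 : Real.log (1 + X ω) ≤ Real.log ((1 + μ) * (1 + ρ)) :=
      Real.log_le_log (by nlinarith) hhi
    rw [Real.norm_eq_abs, abs_le]
    constructor
    · have h3 := neg_abs_le (Real.log ((1 + μ) * (1 - ρ)))
      have h4 := abs_nonneg (Real.log ((1 + μ) * (1 + ρ)))
      linarith
    · have h3 := le_abs_self (Real.log ((1 + μ) * (1 + ρ)))
      have h4 := abs_nonneg (Real.log ((1 + μ) * (1 - ρ)))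
      linarith
  have hlogmeas : AEStronglyMeasurable (fun ω => Real.log (1 + X ω)) ℙ :=
    (Real.measurable_log.comp_aemeasurable
      (aemeasurable_const.add hXmeas)).aestronglyMeasurable
  have hlogint : Integrable (fun ω => Real.log (1 + X ω)) ℙ :=
    Integrable.mono' (integrable_const _) hlogmeas hlogbd
  have hint_tsum : ∫ ω, (∑' n, F n ω) ∂ℙ =
      (∫ ω, Real.log (1 + X ω) ∂ℙ) - Real.log (1 + μ) := by
    rw [integral_congr_ae htsum_ae, integral_sub hlogint (integrable_const _),
      integral_const]
    simp
  set g : ℕ → ℝ := fun n => (-1 : ℝ) ^ n * m (n + 1) / ((n : ℝ) + 1) with hgdef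
  have hFn_int : ∀ n, (∫ ω, F n ω ∂ℙ) = g n := by
    intro n
    rw [hFdef, hgdef]
    simp only
    rw [integral_div, integral_const_mul]
  have hgsum : Summable g := by
    have habs : Summable fun n => |g n| := by
      refine Summable.of_nonneg_of_le (fun n => abs_nonneg _) (fun n => ?_) hgeo1
      rw [hgdef]
      simp only [abs_div, abs_mul, abs_pow, abs_neg, abs_one, one_pow, one_mul]
      have h2 : |(n : ℝ) + 1| = (n : ℝ) + 1 := abs_of_pos (by positivity)
      rw [h2]
      calc |m (n + 1)| / ((n : ℝ) + 1) ≤ |m (n + 1)| :=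
            div_le_self (abs_nonneg _) (by linarith [Nat.cast_nonneg (α := ℝ) n])
        _ ≤ ρ ^ (n + 1) := hm_abs _
    exact habs.of_abs
  have hgsum_eq : (∑' n, g n) = -S := by
    rw [Summable.tsum_eq_zero_add hgsum]
    have h0 : g 0 = 0 := by rw [hgdef]; simp [hm1]
    have h1 : ∀ k : ℕ, g (k + 1) = -((-1 : ℝ) ^ k * a k) := by
      intro k
      rw [hgdef, hadef]
      simp only
      rw [pow_succ]
      push_cast
      ring
    rw [h0, zero_add, tsum_congr h1, tsum_neg, hSdef]
  have hL : ∫ ω, Real.log (1 + X ω) ∂ℙ = Real.log (1 + μ) - S := by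
    have h2 : (∑' n, ∫ ω, F n ω ∂ℙ) = -S := by
      rw [tsum_congr hFn_int, hgsum_eq]
    rw [hswap, hint_tsum] at h2
    linarith
  have hσ2eq : σ2 = ∫ ω, (X ω - μ) ^ 2 ∂ℙ := by
    rw [hσ2, ProbabilityTheory.variance_eq_integral hXmeas, ← hμ]
  have ha0eq : a 0 = σ2 / (2 * (1 + μ) ^ 2) := by
    have hm2 : m 2 = σ2 / (1 + μ) ^ 2 := by rw [hmn, hσ2eq]
    rw [hadef]
    simp only [Nat.cast_zero, Nat.zero_add, zero_add]
    rw [hm2, div_div, mul_comm]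
  have hlog2 : 0 < Real.log 2 := Real.log_pos (by norm_num)
  have hIlogb : ∫ ω, Real.logb 2 (1 + X ω) ∂ℙ =
      (∫ ω, Real.log (1 + X ω) ∂ℙ) / Real.log 2 := by
    simp_rw [Real.logb]
    exact integral_div _ _
  rw [hIlogb, hL]
  have hSle' : S ≤ σ2 / (2 * (1 + μ) ^ 2) := ha0eq ▸ hSle
  constructor
  · rw [Real.logb, Real.logb, Real.log_exp]
    have key : S / Real.log 2 ≤ (σ2 / (2 * (1 + μ) ^ 2)) / Real.log 2 := by gcongr
    have e2 : (Real.log (1 + μ) - S) / Real.log 2 =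
        Real.log (1 + μ) / Real.log 2 - S / Real.log 2 := sub_div _ _ _
    have e3 : 1 / Real.log 2 * σ2 / (2 * (1 + μ) ^ 2) =
        (σ2 / (2 * (1 + μ) ^ 2)) / Real.log 2 := by ring
    rw [e2, e3]
    linarith
  · rw [Real.logb, sub_div]
    have h3 : 0 ≤ S / Real.log 2 := div_nonneg hS0 hlog2.le
    linarith
end

section
/- Let ε₁ and ε₂ be real-valued random variables with ε₁ ≥ 0 and ε₂ ≥ 0 almost surely, means μ₁ = E[ε₁], μ₂ = E[ε₂], and let ε₁ have finite variance σ₁². Suppose there exists ρ ∈ (0,1) such that |ε₁ − μ₁| ≤ ρ(1+μ₁) almost surely, and the sequence c_n = E[(ε₁−μ₁)^n]/(n(1+μ₁)^n), n ≥ 2, is nonnegative and nonincreasing in n. If R ≥ 0 satisfies log₂(1+μ₁) − (log₂ e)·σ₁²/(2(1+μ₁)²) − log₂(1+μ₂) ≥ R, then E[log₂(1+ε₁) − log₂(1+ε₂)] ≥ R. -/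
open MeasureTheory ProbabilityTheory Real

/-- Alternating series with `a 0 = 0` and `a` nonnegative and antitone from index 1:
the sum is at least `-(a 1)`. -/
lemma alt_series_ge_neg_first {a : ℕ → ℝ} {S : ℝ}
    (hS : HasSum (fun n => (-1 : ℝ) ^ n * a n) S) (h0 : a 0 = 0)
    (hanti : ∀ n, 1 ≤ n → a (n + 1) ≤ a n) :
    -(a 1) ≤ S := by
  have hten := hS.tendsto_sum_nat
  have key : ∀ m : ℕ, -(a 1) ≤ ∑ n ∈ Finset.range (2 * m + 2), (-1 : ℝ) ^ n * a n := by
    intro m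
    induction m with
    | zero => simp [Finset.sum_range_succ, h0]
    | succ k ih =>
      have h2 : 2 * (k + 1) + 2 = (2 * k + 2) + 1 + 1 := by ring
      rw [h2, Finset.sum_range_succ, Finset.sum_range_succ]
      have heven : (-1 : ℝ) ^ (2 * k + 2) = 1 := by
        rw [show 2 * k + 2 = 2 * (k + 1) by ring, pow_mul]; norm_num
      have hodd : (-1 : ℝ) ^ (2 * k + 2 + 1) = -1 := by
        rw [pow_succ, heven]; norm_num
      have hstep : a (2 * k + 2 + 1) ≤ a (2 * k + 2) := hanti (2 * k + 2) (by omega)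
      rw [heven, hodd]
      nlinarith
  have h2m : Filter.Tendsto (fun m : ℕ => ∑ n ∈ Finset.range (2 * m + 2),
      (-1 : ℝ) ^ n * a n) Filter.atTop (nhds S) :=
    hten.comp (Filter.tendsto_atTop_mono (fun m => by simp only [id_eq]; omega)
      Filter.tendsto_id)
  exact ge_of_tendsto h2m (Filter.Eventually.of_forall key)

/-- Guarantee underlying Theorem 1: if the deterministic surrogate
`log₂(1+μ₁) − (log₂ e)σ₁²/(2(1+μ₁)²) − log₂(1+μ₂)` dominates the target rate `R`,
then the true ergodic rate `E[log₂(1+ε₁) − log₂(1+ε₂)]` is at least `R`. -/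
theorem ergodic_rate_constraint_guarantee
    {Ω : Type*} [MeasureSpace Ω] [IsProbabilityMeasure (ℙ : Measure Ω)]
    (ε₁ ε₂ : Ω → ℝ) (hε₁meas : AEMeasurable ε₁ ℙ) (hε₂meas : AEMeasurable ε₂ ℙ)
    (hε₁0 : ∀ᵐ ω ∂ℙ, 0 ≤ ε₁ ω) (hε₂0 : ∀ᵐ ω ∂ℙ, 0 ≤ ε₂ ω)
    (hL2 : MemLp ε₁ 2 ℙ) (hε₂int : Integrable ε₂ ℙ)
    (μ₁ μ₂ σ1sq : ℝ) (hμ₁ : μ₁ = ∫ ω, ε₁ ω ∂ℙ) (hμ₂ : μ₂ = ∫ ω, ε₂ ω ∂ℙ)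
    (hσ1sq : σ1sq = variance ε₁ ℙ)
    (hρ : ∃ ρ : ℝ, ρ ∈ Set.Ioo (0 : ℝ) 1 ∧ ∀ᵐ ω ∂ℙ, |ε₁ ω - μ₁| ≤ ρ * (1 + μ₁))
    (hc_nonneg : ∀ n : ℕ, 2 ≤ n →
      0 ≤ (∫ ω, (ε₁ ω - μ₁) ^ n ∂ℙ) / (n * (1 + μ₁) ^ n))
    (hc_anti : ∀ n : ℕ, 2 ≤ n →
      (∫ ω, (ε₁ ω - μ₁) ^ (n + 1) ∂ℙ) / ((n + 1) * (1 + μ₁) ^ (n + 1)) ≤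
        (∫ ω, (ε₁ ω - μ₁) ^ n ∂ℙ) / (n * (1 + μ₁) ^ n))
    (R : ℝ) (hR : 0 ≤ R)
    (hsurrogate : logb 2 (1 + μ₁) - logb 2 (Real.exp 1) * σ1sq / (2 * (1 + μ₁) ^ 2)
        - logb 2 (1 + μ₂) ≥ R) :
    (∫ ω, (logb 2 (1 + ε₁ ω) - logb 2 (1 + ε₂ ω)) ∂ℙ) ≥ R := by
  obtain ⟨ρ, ⟨hρ0, hρ1⟩, hρae⟩ := hρ
  have hε₁int : Integrable ε₁ ℙ := hL2.integrable one_le_two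
  have hμ₁0 : 0 ≤ μ₁ := hμ₁ ▸ integral_nonneg_of_ae hε₁0
  have hμ₂0 : 0 ≤ μ₂ := hμ₂ ▸ integral_nonneg_of_ae hε₂0
  set m : ℝ := 1 + μ₁ with hm_def
  have hm : 0 < m := by positivity
  -- the normalized deviation
  set x : Ω → ℝ := fun ω => (ε₁ ω - μ₁) / m with hx_def
  have hxmeas : AEMeasurable x ℙ := (hε₁meas.sub aemeasurable_const).div aemeasurable_const
  have hxbound : ∀ᵐ ω ∂ℙ, |x ω| ≤ ρ := by
    filter_upwards [hρae] with ω hω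
    rw [hx_def, abs_div, abs_of_pos hm, div_le_iff₀ hm]
    linarith
  -- integral of deviation is zero
  have hdev_int : Integrable (fun ω => ε₁ ω - μ₁) ℙ := hε₁int.sub (integrable_const _)
  have hdev0 : (∫ ω, (ε₁ ω - μ₁) ∂ℙ) = 0 := by
    rw [integral_sub hε₁int (integrable_const _), integral_const]
    simp [← hμ₁]
  -- moments of x
  have hxpow_int : ∀ k : ℕ, Integrable (fun ω => x ω ^ k) ℙ := by
    intro k
    refine Integrable.mono' (integrable_const (1 : ℝ))
      ((hxmeas.pow_const k).aestronglyMeasurable) ?_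
    filter_upwards [hxbound] with ω hω
    rw [norm_pow, Real.norm_eq_abs]
    exact pow_le_one₀ (abs_nonneg _) (hω.trans hρ1.le)
  have hxint_eq : ∀ k : ℕ, (∫ ω, x ω ^ k ∂ℙ) = (∫ ω, (ε₁ ω - μ₁) ^ k ∂ℙ) / m ^ k := by
    intro k
    rw [← integral_div]
    congr 1; funext ω; rw [hx_def]; rw [div_pow]
  set a : ℕ → ℝ := fun n => (∫ ω, x ω ^ (n + 1) ∂ℙ) / (n + 1) with ha_def
  have ha_eq : ∀ n : ℕ,
      a n = (∫ ω, (ε₁ ω - μ₁) ^ (n + 1) ∂ℙ) / ((n + 1 : ℕ) * m ^ (n + 1)) := by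
    intro n
    rw [ha_def]; simp only []
    rw [hxint_eq (n + 1), div_div]
    congr 1
    push_cast
    ring
  have hx0 : (∫ ω, x ω ∂ℙ) = 0 := by
    simp only [hx_def]
    rw [integral_div, hdev0, zero_div]
  have ha0 : a 0 = 0 := by
    simp [ha_def, hx0]
  have ha1 : a 1 = σ1sq / (2 * m ^ 2) := by
    rw [ha_eq 1]
    have hvar : σ1sq = ∫ ω, (ε₁ ω - μ₁) ^ 2 ∂ℙ := by
      rw [hσ1sq, variance_eq_integral hL2.aemeasurable]
      refine integral_congr_ae (Filter.Eventually.of_forall fun ω => ?_)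
      simp [← hμ₁]
    rw [hvar]
    norm_num [mul_comm]
  have ha_anti : ∀ n : ℕ, 1 ≤ n → a (n + 1) ≤ a n := by
    intro n hn
    rw [ha_eq n, ha_eq (n + 1)]
    have := hc_anti (n + 1) (by omega)
    push_cast at this ⊢
    convert this using 3 <;> ring
  -- the series terms
  set F : ℕ → Ω → ℝ := fun n ω => (-1 : ℝ) ^ n * (x ω ^ (n + 1) / (n + 1)) with hF_def
  have hF_int : ∀ n, Integrable (F n) ℙ :=
    fun n => ((hxpow_int (n + 1)).div_const _).const_mul _
  have hF_integral : ∀ n, (∫ ω, F n ω ∂ℙ) = (-1 : ℝ) ^ n * a n := by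
    intro n
    rw [hF_def]; simp only []
    rw [integral_const_mul, integral_div]
  have hF_norm_le : ∀ n, (∫ ω, ‖F n ω‖ ∂ℙ) ≤ ρ ^ (n + 1) := by
    intro n
    have : (∫ ω, ‖F n ω‖ ∂ℙ) ≤ ∫ _ : Ω, ρ ^ (n + 1) ∂ℙ := by
      refine integral_mono_ae (hF_int n).norm (integrable_const _) ?_
      filter_upwards [hxbound] with ω hω
      rw [hF_def]
      simp only [norm_mul, norm_pow, norm_div, norm_neg, norm_one, Real.norm_eq_abs,
        abs_neg, abs_one, one_pow, one_mul]
      calc |x ω| ^ (n + 1) / |((n : ℝ) + 1)| ≤ |x ω| ^ (n + 1) / 1 := by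
            apply div_le_div_of_nonneg_left (pow_nonneg (abs_nonneg _) _) one_pos
            rw [abs_of_nonneg (by positivity)]
            push_cast; linarith [Nat.cast_nonneg (α := ℝ) n]
        _ = |x ω| ^ (n + 1) := div_one _
        _ ≤ ρ ^ (n + 1) := pow_le_pow_left₀ (abs_nonneg _) hω _
    simpa using this
  have hF_sum : Summable fun n => ∫ ω, ‖F n ω‖ ∂ℙ := by
    refine Summable.of_nonneg_of_le (fun n => integral_nonneg fun ω => norm_nonneg _)
      hF_norm_le ?_
    simpa [pow_succ'] using (summable_geometric_of_lt_one hρ0.le hρ1).mul_left ρ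
  have hHasSum := hasSum_integral_of_summable_integral_norm hF_int hF_sum
  -- pointwise sum of the series
  have hpointwise : ∀ᵐ ω ∂ℙ, (∑' n, F n ω) = Real.log (1 + ε₁ ω) - Real.log m := by
    filter_upwards [hxbound] with ω hω
    have hxlt : |(-(x ω))| < 1 := by rw [abs_neg]; exact lt_of_le_of_lt hω hρ1
    have h := (hasSum_pow_div_log_of_abs_lt_one hxlt).neg
    have h1x : 0 < 1 + x ω := by
      linarith [(abs_le.mp hω).1]
    have heq : (fun n : ℕ => -((-x ω) ^ (n + 1) / (n + 1))) = fun n => F n ω := by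
      funext n
      rw [hF_def]
      simp only [neg_pow (x ω), pow_succ (-1 : ℝ) n]
      ring
    rw [heq] at h
    have hval : -(-Real.log (1 - -x ω)) = Real.log (1 + ε₁ ω) - Real.log m := by
      rw [neg_neg, sub_neg_eq_add]
      have hx1 : 1 + ε₁ ω = (1 + x ω) * m := by
        simp only [hx_def]; field_simp; simp only [hm_def]; ring
      have hpos : 0 < 1 + ε₁ ω := hx1 ▸ mul_pos h1x hm
      have hx2 : 1 + x ω = (1 + ε₁ ω) / m := by
        rw [hx1, mul_div_assoc, div_self (ne_of_gt hm), mul_one]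
      rw [hx2, Real.log_div (ne_of_gt hpos) (ne_of_gt hm)]
    rw [hval] at h
    exact h.tsum_eq
  have hIlogm : Integrable (fun ω => Real.log (1 + ε₁ ω) - Real.log m) ℙ := by
    refine Integrable.mono' (integrable_const (|Real.log (m * (1 - ρ))| +
      |Real.log (m * (1 + ρ))| + |Real.log m|)) ?_ ?_
    · exact ((Real.measurable_log.comp_aemeasurable
        (aemeasurable_const.add hε₁meas)).sub aemeasurable_const).aestronglyMeasurable
    · filter_upwards [hρae] with ω hω
      have hlo : m * (1 - ρ) ≤ 1 + ε₁ ω := by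
        have := (abs_le.mp hω).1; rw [hm_def]; nlinarith
      have hhi : 1 + ε₁ ω ≤ m * (1 + ρ) := by
        have := (abs_le.mp hω).2; rw [hm_def]; nlinarith
      have hpos : 0 < m * (1 - ρ) := mul_pos hm (by linarith)
      have h1 : Real.log (m * (1 - ρ)) ≤ Real.log (1 + ε₁ ω) :=
        Real.log_le_log hpos hlo
      have h2 : Real.log (1 + ε₁ ω) ≤ Real.log (m * (1 + ρ)) :=
        Real.log_le_log (lt_of_lt_of_le hpos hlo) hhi
      rw [Real.norm_eq_abs]
      rw [abs_sub_le_iff]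
      have k1 := neg_abs_le (Real.log (m * (1 - ρ)))
      have k2 := le_abs_self (Real.log (m * (1 + ρ)))
      have k3 := neg_abs_le (Real.log m)
      have k4 := le_abs_self (Real.log m)
      have k5 := abs_nonneg (Real.log (m * (1 - ρ)))
      have k6 := abs_nonneg (Real.log (m * (1 + ρ)))
      have k7 := abs_nonneg (Real.log m)
      constructor
      · linarith
      · linarith
  -- the integral of the log series
  have hS : HasSum (fun n => (-1 : ℝ) ^ n * a n)
      (∫ ω, (Real.log (1 + ε₁ ω) - Real.log m) ∂ℙ) := by
    have := hHasSum
    rw [integral_congr_ae hpointwise] at this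
    simpa only [hF_integral] using this
  have hmain : -(σ1sq / (2 * m ^ 2)) ≤ ∫ ω, (Real.log (1 + ε₁ ω) - Real.log m) ∂ℙ := by
    rw [← ha1]
    exact alt_series_ge_neg_first hS ha0 ha_anti
  have hIlog1 : Integrable (fun ω => Real.log (1 + ε₁ ω)) ℙ := by
    have : (fun ω => Real.log (1 + ε₁ ω)) =
        fun ω => (Real.log (1 + ε₁ ω) - Real.log m) + Real.log m := by
      funext ω; ring
    rw [this]
    exact hIlogm.add (integrable_const _)
  have hE1 : Real.log m - σ1sq / (2 * m ^ 2) ≤ ∫ ω, Real.log (1 + ε₁ ω) ∂ℙ := by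
    have hsplit : (∫ ω, (Real.log (1 + ε₁ ω) - Real.log m) ∂ℙ)
        = (∫ ω, Real.log (1 + ε₁ ω) ∂ℙ) - Real.log m := by
      rw [integral_sub hIlog1 (integrable_const _), integral_const]
      simp
    rw [hsplit] at hmain
    linarith
  -- Jensen bound for ε₂
  have hIlog2 : Integrable (fun ω => Real.log (1 + ε₂ ω)) ℙ := by
    refine Integrable.mono' hε₂int
      ((Real.measurable_log.comp_aemeasurable
        (aemeasurable_const.add hε₂meas)).aestronglyMeasurable) ?_
    filter_upwards [hε₂0] with ω hω
    rw [Real.norm_eq_abs, abs_of_nonneg (Real.log_nonneg (by linarith))]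
    have := Real.log_le_sub_one_of_pos (show (0:ℝ) < 1 + ε₂ ω by linarith)
    linarith
  have hE2 : (∫ ω, Real.log (1 + ε₂ ω) ∂ℙ) ≤ Real.log (1 + μ₂) := by
    have hpt : ∀ᵐ ω ∂ℙ, Real.log (1 + ε₂ ω) ≤
        Real.log (1 + μ₂) + (ε₂ ω - μ₂) / (1 + μ₂) := by
      filter_upwards [hε₂0] with ω hω
      have h2 : (0:ℝ) < 1 + μ₂ := by linarith
      have h3 : (0:ℝ) < 1 + ε₂ ω := by linarith
      have := Real.log_le_sub_one_of_pos (show (0:ℝ) < (1 + ε₂ ω) / (1 + μ₂) by positivity)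
      rw [Real.log_div (ne_of_gt h3) (ne_of_gt h2)] at this
      have heq : (1 + ε₂ ω) / (1 + μ₂) - 1 = (ε₂ ω - μ₂) / (1 + μ₂) := by
        field_simp
        ring
      rw [heq] at this
      linarith
    have hint_rhs : Integrable (fun ω => Real.log (1 + μ₂) + (ε₂ ω - μ₂) / (1 + μ₂)) ℙ :=
      (integrable_const _).add ((hε₂int.sub (integrable_const _)).div_const _)
    calc (∫ ω, Real.log (1 + ε₂ ω) ∂ℙ)
        ≤ ∫ ω, (Real.log (1 + μ₂) + (ε₂ ω - μ₂) / (1 + μ₂)) ∂ℙ :=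
          integral_mono_ae hIlog2 hint_rhs hpt
      _ = Real.log (1 + μ₂) := by
          have h1 : (∫ ω, ((ε₂ ω - μ₂) / (1 + μ₂)) ∂ℙ) = 0 := by
            rw [integral_div, integral_sub hε₂int (integrable_const _), integral_const]
            simp [← hμ₂]
          have hint2' : Integrable (fun ω => (ε₂ ω - μ₂) / (1 + μ₂)) ℙ := by
            exact (hε₂int.sub (integrable_const _)).div_const _
          rw [integral_add (integrable_const _) hint2', h1, integral_const]
          simp
  -- assemble
  have hlog2 : (0:ℝ) < Real.log 2 := Real.log_pos one_lt_two
  have hrw : (∫ ω, (logb 2 (1 + ε₁ ω) - logb 2 (1 + ε₂ ω)) ∂ℙ)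
      = ((∫ ω, Real.log (1 + ε₁ ω) ∂ℙ) - ∫ ω, Real.log (1 + ε₂ ω) ∂ℙ) / Real.log 2 := by
    rw [← integral_sub hIlog1 hIlog2, ← integral_div]
    refine integral_congr_ae (Filter.Eventually.of_forall fun ω => ?_)
    simp only [Real.logb, div_sub_div_same]
  rw [hrw]
  have hsur : (Real.log m - σ1sq / (2 * m ^ 2) - Real.log (1 + μ₂)) / Real.log 2 ≥ R := by
    have : logb 2 (1 + μ₁) - logb 2 (Real.exp 1) * σ1sq / (2 * (1 + μ₁) ^ 2)
        - logb 2 (1 + μ₂)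
        = (Real.log m - σ1sq / (2 * m ^ 2) - Real.log (1 + μ₂)) / Real.log 2 := by
      rw [Real.logb, Real.logb, Real.logb, Real.log_exp, hm_def]
      field_simp
    rw [← this]
    exact hsurrogate
  refine le_trans hsur ?_
  gcongr (?_) / _
  linarith
end

section
/- Let P_c, P_p > 0, α₁ ∈ [0,1), and set σ̂² = (1−α₁)P_c. Let H₂₁ and H₂₂ be independent circularly symmetric complex Gaussian random variables with H₂ⱼ ~ CN(μ₂ⱼ, σ₂ⱼ²) and |μ₂ⱼ|² + σ₂ⱼ² = 1 for j = 1,2, and set H_s = H₂₁ + √(α₁P_c/P_p)·H₂₂. Define F : ℂ → ℝ by F(α₂) = σ̂²·P_p·E[|H_s − α₂H₂₂|²] + σ̂² + |α₂|²P_p. Then F is a strictly convex function of α₂ (viewed as a function on ℝ²) and attains its unique global minimum at α₂ = (μ₂₂*·μ₂₁ + √(α₁P_c/P_p))·(1−α₁)P_c / ((1−α₁)P_c + 1). -/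
open MeasureTheory ProbabilityTheory Real Filter Set
open scoped NNReal ENNReal

-- integrability facts
lemma int_sq_exp : Integrable (fun x : ℝ => x ^ 2 * Real.exp (-(1/2 : ℝ) * x ^ 2)) := by
  have := integrable_rpow_mul_exp_neg_mul_sq (b := 1/2) (by norm_num) (s := 2) (by norm_num)
  simpa [Real.rpow_natCast] using this

lemma tendsto_mul_exp_atTop : Tendsto (fun x : ℝ => x * Real.exp (-(1/2 : ℝ) * x ^ 2)) atTop (nhds 0) := by
  have h2 : Tendsto (fun x : ℝ => x ^ 2 * Real.exp (-(1/2 : ℝ) * x ^ 2)) atTop (nhds 0) := by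
    have hc : Tendsto (fun x : ℝ => (1/2 : ℝ) * x ^ 2) atTop atTop :=
      (tendsto_pow_atTop (n := 2) two_ne_zero).const_mul_atTop (by norm_num)
    have hy : Tendsto (fun y : ℝ => 2 * y * Real.exp (-y)) atTop (nhds 0) := by
      have := (tendsto_pow_mul_exp_neg_atTop_nhds_zero 1).const_mul (2 : ℝ)
      simpa [mul_assoc] using this
    have := hy.comp hc
    refine this.congr fun x => ?_
    simp only [Function.comp]
    ring_nf
  refine squeeze_zero_norm' ?_ h2
  filter_upwards [eventually_ge_atTop (1 : ℝ)] with x hx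
  have hx0 : (0:ℝ) ≤ x := by linarith
  rw [Real.norm_eq_abs, abs_mul, abs_of_nonneg hx0, abs_of_nonneg (Real.exp_pos _).le]
  have h1 : x ≤ x ^ 2 := by nlinarith
  exact mul_le_mul_of_nonneg_right h1 (Real.exp_pos _).le

lemma ibp_eq : (∫ x : ℝ, x ^ 2 * Real.exp (-(1/2 : ℝ) * x ^ 2))
    = ∫ x : ℝ, Real.exp (-(1/2 : ℝ) * x ^ 2) := by
  set h : ℝ → ℝ := fun x => x ^ 2 * Real.exp (-(1/2 : ℝ) * x ^ 2) - Real.exp (-(1/2 : ℝ) * x ^ 2) with hh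
  set φ : ℝ → ℝ := fun x => -(x * Real.exp (-(1/2 : ℝ) * x ^ 2)) with hφ
  have hderiv : ∀ x : ℝ, HasDerivAt φ (h x) x := by
    intro x
    refine HasDerivAt.congr_deriv ((hasDerivAt_id x).mul (((hasDerivAt_pow 2 x).const_mul (-(1/2 : ℝ))).exp)).neg ?_
    simp only [hh, id_eq, pow_one]
    ring
  have hint : Integrable h := int_sq_exp.sub (integrable_exp_neg_mul_sq (by norm_num))
  have htop : Tendsto φ atTop (nhds 0) := by simpa only [neg_zero] using tendsto_mul_exp_atTop.neg
  have hbot : Tendsto φ atBot (nhds 0) := by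
    have := tendsto_mul_exp_atTop.comp tendsto_neg_atBot_atTop
    refine this.congr fun x => ?_
    simp only [Function.comp, hφ]
    ring_nf
  have hIoi : ∫ x in Set.Ioi (0:ℝ), h x = 0 - φ 0 :=
    integral_Ioi_of_hasDerivAt_of_tendsto' (fun x _ => hderiv x) hint.integrableOn htop
  have hIic : ∫ x in Set.Iic (0:ℝ), h x = φ 0 - 0 :=
    integral_Iic_of_hasDerivAt_of_tendsto' (fun x _ => hderiv x) hint.integrableOn hbot
  have hsplit := intervalIntegral.integral_Iic_add_Ioi (μ := volume) (f := h) (b := 0) hint.integrableOn hint.integrableOn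
  have hzero : ∫ x : ℝ, h x = 0 := by
    rw [← hsplit, hIoi, hIic]; simp [hφ]
  have := integral_sub int_sq_exp (integrable_exp_neg_mul_sq (by norm_num : (0:ℝ) < 1/2))
  rw [hh] at hzero
  rw [this] at hzero
  linarith

lemma pdf01 (x : ℝ) : gaussianPDFReal 0 1 x = (Real.sqrt (2 * Real.pi))⁻¹ * Real.exp (-(1/2 : ℝ) * x ^ 2) := by
  unfold gaussianPDFReal
  push_cast
  norm_num
  left
  ring

lemma integral_gaussianReal01 (f : ℝ → ℝ) :
    ∫ x, f x ∂(gaussianReal 0 1) = ∫ x, gaussianPDFReal 0 1 x * f x := by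
  rw [gaussianReal_of_var_ne_zero _ one_ne_zero]
  have hpdf : gaussianPDF 0 1 = fun x => ((Real.toNNReal (gaussianPDFReal 0 1 x) : ℝ≥0) : ℝ≥0∞) := by
    funext x
    simp [gaussianPDF, ENNReal.ofReal]
  rw [hpdf, integral_withDensity_eq_integral_smul
    ((measurable_gaussianPDFReal 0 1).real_toNNReal : Measurable fun x => Real.toNNReal (gaussianPDFReal 0 1 x)) f]
  congr 1 with x
  simp [NNReal.smul_def, Real.coe_toNNReal _ (gaussianPDFReal_nonneg 0 1 x)]

lemma moment1 : ∫ x, x ∂(gaussianReal 0 1) = 0 := by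
  rw [integral_gaussianReal01]
  have : ∀ x : ℝ, gaussianPDFReal 0 1 (-x) * (-x) = -(gaussianPDFReal 0 1 x * x) := by
    intro x; rw [pdf01, pdf01]; ring
  have h := MeasureTheory.integral_neg_eq_self (fun x : ℝ => gaussianPDFReal 0 1 x * x) volume
  have h2 : ∫ x : ℝ, gaussianPDFReal 0 1 x * x = - ∫ x : ℝ, gaussianPDFReal 0 1 x * x := by
    conv_lhs => rw [← h]
    simp_rw [this, integral_neg]
  linarith

lemma integrable_gauss01 (f : ℝ → ℝ) (hmeas : Measurable f)
    (hint : Integrable (fun x => f x * Real.exp (-(1/2 : ℝ) * x ^ 2))) :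
    Integrable f (gaussianReal 0 1) := by
  rw [gaussianReal_of_var_ne_zero _ one_ne_zero]
  have hpdf : gaussianPDF 0 1 = fun x => ((Real.toNNReal (gaussianPDFReal 0 1 x) : ℝ≥0) : ℝ≥0∞) := by
    funext x; simp [gaussianPDF, ENNReal.ofReal]
  rw [hpdf, integrable_withDensity_iff_integrable_smul (measurable_gaussianPDFReal 0 1).real_toNNReal]
  have : (fun x => (Real.toNNReal (gaussianPDFReal 0 1 x)) • f x)
      = fun x => (Real.sqrt (2 * Real.pi))⁻¹ * (f x * Real.exp (-(1/2 : ℝ) * x ^ 2)) := by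
    funext x
    rw [NNReal.smul_def, Real.coe_toNNReal _ (gaussianPDFReal_nonneg 0 1 x), pdf01, smul_eq_mul]
    ring
  rw [this]
  exact hint.const_mul _

lemma integrable_id_gauss : Integrable (fun x : ℝ => x) (gaussianReal 0 1) :=
  integrable_gauss01 _ measurable_id (by simpa using integrable_mul_exp_neg_mul_sq (by norm_num : (0:ℝ) < 1/2))

lemma integrable_sq_gauss : Integrable (fun x : ℝ => x ^ 2) (gaussianReal 0 1) :=
  integrable_gauss01 _ (measurable_id.pow_const 2) int_sq_exp

lemma moment2 : ∫ x, x ^ 2 ∂(gaussianReal 0 1) = 1 := by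
  rw [integral_gaussianReal01]
  have h1 : (fun x : ℝ => gaussianPDFReal 0 1 x * x ^ 2)
      = fun x => (Real.sqrt (2 * Real.pi))⁻¹ * (x ^ 2 * Real.exp (-(1/2 : ℝ) * x ^ 2)) := by
    funext x; rw [pdf01]; ring
  have h2 : (fun x : ℝ => gaussianPDFReal 0 1 x)
      = fun x => (Real.sqrt (2 * Real.pi))⁻¹ * Real.exp (-(1/2 : ℝ) * x ^ 2) := by
    funext x; rw [pdf01]
  rw [h1, integral_const_mul, ibp_eq]
  have := integral_gaussianPDFReal_eq_one 0 (v := 1) one_ne_zero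
  rw [h2] at this
  rw [integral_const_mul] at this
  exact this

section OmegaFacts
variable {Ω : Type*} [MeasureSpace Ω] [IsProbabilityMeasure (ℙ : Measure Ω)]
  (g : Fin 4 → Ω → ℝ) (hgmeas : ∀ i, Measurable (g i))
  (hindep : iIndepFun g ℙ)
  (hgauss : ∀ i, Measure.map (g i) ℙ = gaussianReal 0 1)

include hgmeas hgauss in
lemma g_int (i : Fin 4) : Integrable (g i) ℙ := by
  have h := integrable_id_gauss
  rw [← hgauss i] at h
  exact (integrable_map_measure aestronglyMeasurable_id (hgmeas i).aemeasurable).mp h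

include hgmeas hgauss in
lemma g_sq_int (i : Fin 4) : Integrable (fun ω => g i ω ^ 2) ℙ := by
  have h := integrable_sq_gauss
  rw [← hgauss i] at h
  exact (integrable_map_measure (by fun_prop) (hgmeas i).aemeasurable).mp h

include hgmeas hgauss in
lemma g_exp (i : Fin 4) : ∫ ω, g i ω ∂ℙ = 0 := by
  have h : ∫ x, id x ∂(Measure.map (g i) ℙ) = ∫ ω, id (g i ω) ∂ℙ :=
    integral_map (hgmeas i).aemeasurable (by rw [hgauss i]; exact aestronglyMeasurable_id)
  rw [show (∫ ω, g i ω ∂ℙ) = ∫ ω, id (g i ω) ∂ℙ from rfl, ← h, hgauss i]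
  exact moment1

include hgmeas hgauss in
lemma g_sq_exp (i : Fin 4) : ∫ ω, g i ω ^ 2 ∂ℙ = 1 := by
  have h : ∫ x, (fun x : ℝ => x ^ 2) x ∂(Measure.map (g i) ℙ) = ∫ ω, (fun x : ℝ => x ^ 2) (g i ω) ∂ℙ :=
    integral_map (hgmeas i).aemeasurable (by fun_prop)
  rw [show (∫ ω, g i ω ^ 2 ∂ℙ) = ∫ ω, (fun x : ℝ => x ^ 2) (g i ω) ∂ℙ from rfl, ← h, hgauss i]
  exact moment2

include hgmeas hindep hgauss in
lemma g_mul_int (i j : Fin 4) : Integrable (fun ω => g i ω * g j ω) ℙ := by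
  rcases eq_or_ne i j with rfl | hij
  · simpa [pow_two] using g_sq_int g hgmeas hgauss i
  · exact (hindep.indepFun hij).integrable_mul (g_int g hgmeas hgauss i) (g_int g hgmeas hgauss j)

include hgmeas hindep hgauss in
lemma g_mul_exp (i j : Fin 4) :
    ∫ ω, g i ω * g j ω ∂ℙ = if i = j then 1 else 0 := by
  rcases eq_or_ne i j with rfl | hij
  · simpa [pow_two] using g_sq_exp g hgmeas hgauss i
  · rw [if_neg hij]
    have := (hindep.indepFun hij).integral_mul_eq_mul_integral
      (g_int g hgmeas hgauss i).1 (g_int g hgmeas hgauss j).1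
    rw [show (∫ ω, g i ω * g j ω ∂ℙ) = ∫ ω, (g i * g j) ω ∂ℙ from rfl]
    rw [this, g_exp g hgmeas hgauss i, zero_mul]

include hgmeas hindep hgauss in
lemma affine_sq_int (a : ℝ) (c : Fin 4 → ℝ) :
    Integrable (fun ω => (a + ∑ i, c i * g i ω) ^ 2) ℙ := by
  have hpt : ∀ ω, (a + ∑ i, c i * g i ω) ^ 2
      = a ^ 2 + ∑ i, (2 * a) * (c i * g i ω)
        + ∑ i, ∑ j, (c i * c j) * (g i ω * g j ω) := by
    intro ω
    have hterm : ∀ i j : Fin 4, (c i * c j) * (g i ω * g j ω)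
        = (c i * g i ω) * (c j * g j ω) := by intros; ring
    simp_rw [hterm, ← Finset.sum_mul_sum, ← Finset.mul_sum]
    ring
  have hA : Integrable (fun ω => ∑ i, (2 * a) * (c i * g i ω)) ℙ := by
    apply integrable_finset_sum
    intro i _
    simpa [mul_assoc] using ((g_int g hgmeas hgauss i).const_mul (2 * a * c i))
  have hB : Integrable (fun ω => ∑ i, ∑ j, (c i * c j) * (g i ω * g j ω)) ℙ := by
    apply integrable_finset_sum
    intro i _
    apply integrable_finset_sum
    intro j _
    exact (g_mul_int g hgmeas hindep hgauss i j).const_mul _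
  have : (fun ω => (a + ∑ i, c i * g i ω) ^ 2)
      = fun ω => a ^ 2 + ∑ i, (2 * a) * (c i * g i ω)
        + ∑ i, ∑ j, (c i * c j) * (g i ω * g j ω) := funext hpt
  rw [this]
  exact ((integrable_const _).add hA).add hB

include hgmeas hindep hgauss in
lemma affine_sq_exp (a : ℝ) (c : Fin 4 → ℝ) :
    ∫ ω, (a + ∑ i, c i * g i ω) ^ 2 ∂ℙ = a ^ 2 + ∑ i, c i ^ 2 := by
  have hpt : ∀ ω, (a + ∑ i, c i * g i ω) ^ 2
      = a ^ 2 + ∑ i, (2 * a) * (c i * g i ω)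
        + ∑ i, ∑ j, (c i * c j) * (g i ω * g j ω) := by
    intro ω
    have hterm : ∀ i j : Fin 4, (c i * c j) * (g i ω * g j ω)
        = (c i * g i ω) * (c j * g j ω) := by intros; ring
    simp_rw [hterm, ← Finset.sum_mul_sum, ← Finset.mul_sum]
    ring
  simp_rw [hpt]
  have hA : Integrable (fun ω => ∑ i, (2 * a) * (c i * g i ω)) ℙ := by
    apply integrable_finset_sum
    intro i _
    simpa [mul_assoc] using ((g_int g hgmeas hgauss i).const_mul (2 * a * c i))
  have hB : Integrable (fun ω => ∑ i, ∑ j, (c i * c j) * (g i ω * g j ω)) ℙ := by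
    apply integrable_finset_sum
    intro i _
    apply integrable_finset_sum
    intro j _
    exact (g_mul_int g hgmeas hindep hgauss i j).const_mul _
  rw [integral_add (show Integrable (fun ω => a ^ 2 + ∑ i, (2 * a) * (c i * g i ω)) ℙ from
      (integrable_const _).add hA) hB,
    integral_add (integrable_const _) hA, integral_const]
  simp only [probReal_univ, ENNReal.toReal_one, smul_eq_mul, one_smul, one_mul]
  rw [integral_finset_sum _ (fun i _ => by
    simpa [mul_assoc] using ((g_int g hgmeas hgauss i).const_mul (2 * a * c i)))]
  rw [integral_finset_sum _ (fun i _ => integrable_finset_sum _ (fun j _ =>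
    (g_mul_int g hgmeas hindep hgauss i j).const_mul _))]
  have h1 : ∀ i : Fin 4, ∫ ω, (2 * a) * (c i * g i ω) ∂ℙ = 0 := by
    intro i
    have : (fun ω => (2 * a) * (c i * g i ω)) = fun ω => (2 * a * c i) * g i ω := by
      funext ω; ring
    rw [this, integral_const_mul, g_exp g hgmeas hgauss i, mul_zero]
  have h2 : ∀ i : Fin 4, (∫ ω, ∑ j, (c i * c j) * (g i ω * g j ω) ∂ℙ) = c i ^ 2 := by
    intro i
    rw [integral_finset_sum _ (fun j _ => (g_mul_int g hgmeas hindep hgauss i j).const_mul _)]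
    have : ∀ j : Fin 4, (∫ ω, (c i * c j) * (g i ω * g j ω) ∂ℙ)
        = (c i * c j) * (if i = j then 1 else 0) := by
      intro j
      rw [integral_const_mul, g_mul_exp g hgmeas hindep hgauss i j]
    simp_rw [this]
    simp [Finset.sum_ite_eq, pow_two]
  simp_rw [h1, h2]
  simp
include hgmeas hindep hgauss in
lemma complex_affine_sq_exp (m : ℂ) (z : Fin 4 → ℂ) :
    ∫ ω, ‖m + ∑ i, z i * (g i ω : ℂ)‖ ^ 2 ∂ℙ
      = ‖m‖ ^ 2 + ∑ i, ‖z i‖ ^ 2 := by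
  have hre : ∀ ω, (m + ∑ i, z i * ((g i ω : ℝ) : ℂ)).re = m.re + ∑ i, (z i).re * g i ω := by
    intro ω
    simp [Complex.re_sum, Complex.mul_re]
  have him : ∀ ω, (m + ∑ i, z i * ((g i ω : ℝ) : ℂ)).im = m.im + ∑ i, (z i).im * g i ω := by
    intro ω
    simp [Complex.im_sum, Complex.mul_im]
  have hpt : ∀ ω, ‖m + ∑ i, z i * (g i ω : ℂ)‖ ^ 2
      = (m.re + ∑ i, (z i).re * g i ω) ^ 2 + (m.im + ∑ i, (z i).im * g i ω) ^ 2 := by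
    intro ω
    rw [Complex.sq_norm, Complex.normSq_apply, hre ω, him ω]
    ring
  simp_rw [hpt]
  rw [integral_add (affine_sq_int g hgmeas hindep hgauss m.re (fun i => (z i).re))
    (affine_sq_int g hgmeas hindep hgauss m.im (fun i => (z i).im)),
    affine_sq_exp g hgmeas hindep hgauss m.re (fun i => (z i).re),
    affine_sq_exp g hgmeas hindep hgauss m.im (fun i => (z i).im)]
  have habs : ‖m‖ ^ 2 = m.re ^ 2 + m.im ^ 2 := by
    rw [Complex.sq_norm, Complex.normSq_apply]; ring
  have habs' : ∀ i : Fin 4, ‖z i‖ ^ 2 = (z i).re ^ 2 + (z i).im ^ 2 := by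
    intro i; rw [Complex.sq_norm, Complex.normSq_apply]; ring
  simp_rw [habs, habs', Finset.sum_add_distrib]
  ring


end OmegaFacts

lemma strictconvex_quad (A : ℝ) (hA : 0 < A) (mm : ℂ) (C : ℝ) :
    StrictConvexOn ℝ Set.univ (fun z : ℂ => A * ‖z - mm‖ ^ 2 + C) := by
  refine ⟨convex_univ, ?_⟩
  intro x _ y _ hxy a b ha hb hab
  have hb1 : b = 1 - a := by linarith
  subst hb1
  simp only [smul_eq_mul, Complex.sq_norm, Complex.normSq_apply, Complex.sub_re, Complex.sub_im,
    Complex.add_re, Complex.add_im, Complex.smul_re, Complex.smul_im]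
  have hcomp : x.re ≠ y.re ∨ x.im ≠ y.im := by
    by_contra hcon
    push_neg at hcon
    exact hxy (Complex.ext hcon.1 hcon.2)
  have hne : 0 < (x.re - y.re) ^ 2 + (x.im - y.im) ^ 2 := by
    rcases hcomp with h | h
    · nlinarith [mul_self_pos.mpr (sub_ne_zero.mpr h), sq_nonneg (x.im - y.im)]
    · nlinarith [mul_self_pos.mpr (sub_ne_zero.mpr h), sq_nonneg (x.re - y.re)]
  nlinarith [mul_pos (mul_pos (mul_pos hA ha) hb) hne]

/-- Proposition 1 of the paper: with `H₂₁, H₂₂` independent circularly symmetric complex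
Gaussians (each written as `μ + σ(ξ + iη)/√2` with all real Gaussian components
independent standard normals), the expected denominator
`F(α₂) = σ̂²·P_p·E[|H_s − α₂H₂₂|²] + σ̂² + |α₂|²P_p` is strictly convex in `α₂ ∈ ℂ ≅ ℝ²`
and has its unique global minimum at
`α₂ = (μ₂₂*·μ₂₁ + √(α₁P_c/P_p))·(1−α₁)P_c / ((1−α₁)P_c + 1)`. -/
theorem fast_fading_precoding_coefficient
    {Ω : Type*} [MeasureSpace Ω] [IsProbabilityMeasure (ℙ : Measure Ω)]
    (Pc Pp α₁ : ℝ) (hPc : 0 < Pc) (hPp : 0 < Pp) (hα₁ : α₁ ∈ Set.Ico (0 : ℝ) 1)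
    (μ21 μ22 : ℂ) (σ21 σ22 : ℝ)
    (hnorm21 : ‖μ21‖ ^ 2 + σ21 ^ 2 = 1)
    (hnorm22 : ‖μ22‖ ^ 2 + σ22 ^ 2 = 1)
    (g : Fin 4 → Ω → ℝ) (hgmeas : ∀ i, Measurable (g i))
    (hindep : iIndepFun g ℙ)
    (hgauss : ∀ i, Measure.map (g i) ℙ = gaussianReal 0 1)
    (H21 H22 : Ω → ℂ)
    (hH21 : H21 = fun ω => μ21 + (σ21 : ℂ) * (g 0 ω + Complex.I * g 1 ω) / (Real.sqrt 2 : ℂ))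
    (hH22 : H22 = fun ω => μ22 + (σ22 : ℂ) * (g 2 ω + Complex.I * g 3 ω) / (Real.sqrt 2 : ℂ))
    (Hs : Ω → ℂ)
    (hHs : Hs = fun ω => H21 ω + (Real.sqrt (α₁ * Pc / Pp) : ℂ) * H22 ω)
    (F : ℂ → ℝ)
    (hF : F = fun α₂ => (1 - α₁) * Pc * Pp * (∫ ω, ‖Hs ω - α₂ * H22 ω‖ ^ 2 ∂ℙ)
        + (1 - α₁) * Pc + ‖α₂‖ ^ 2 * Pp)
    (αstar : ℂ)
    (hαstar : αstar = ((starRingEnd ℂ) μ22 * μ21 + (Real.sqrt (α₁ * Pc / Pp) : ℂ)) *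
        (((1 - α₁) * Pc : ℝ) : ℂ) / ((((1 - α₁) * Pc : ℝ) : ℂ) + 1)) :
    StrictConvexOn ℝ Set.univ F ∧ ∀ z : ℂ, z ≠ αstar → F αstar < F z := by
  obtain ⟨hα₁0, hα₁1⟩ := hα₁
  set K : ℝ := (1 - α₁) * Pc with hK
  have hKpos : 0 < K := mul_pos (by linarith) hPc
  set c : ℝ := Real.sqrt (α₁ * Pc / Pp) with hc
  -- the coefficient vector
  set zv : ℂ → Fin 4 → ℂ := fun α => ![(σ21 : ℂ) / (Real.sqrt 2 : ℂ),
      Complex.I * (σ21 : ℂ) / (Real.sqrt 2 : ℂ),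
      ((c : ℂ) - α) * (σ22 : ℂ) / (Real.sqrt 2 : ℂ),
      ((c : ℂ) - α) * Complex.I * (σ22 : ℂ) / (Real.sqrt 2 : ℂ)] with hzv
  have hfun : ∀ (α : ℂ) (ω : Ω), Hs ω - α * H22 ω
      = (μ21 + ((c : ℂ) - α) * μ22) + ∑ i, zv α i * (g i ω : ℂ) := by
    intro α ω
    rw [hHs, hH21, hH22]
    simp only [hzv, Fin.sum_univ_four, Matrix.cons_val_zero, Matrix.cons_val_one,
      Matrix.head_cons, Matrix.cons_val_two, Matrix.tail_cons, Matrix.cons_val_three]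
    ring
  have hsqrt2 : (Real.sqrt 2 : ℝ) ^ 2 = 2 := Real.sq_sqrt (by norm_num)
  have hE : ∀ α : ℂ, (∫ ω, ‖Hs ω - α * H22 ω‖ ^ 2 ∂ℙ)
      = ‖μ21 + ((c : ℂ) - α) * μ22‖ ^ 2
        + (σ21 ^ 2 + ‖(c : ℂ) - α‖ ^ 2 * σ22 ^ 2) := by
    intro α
    simp_rw [hfun α]
    rw [complex_affine_sq_exp g hgmeas hindep hgauss _ (zv α)]
    congr 1
    rw [Fin.sum_univ_four]
    simp only [hzv, Matrix.cons_val_zero, Matrix.cons_val_one, Matrix.head_cons,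
      Matrix.cons_val_two, Matrix.tail_cons, Matrix.cons_val_three]
    rw [norm_div, norm_div, norm_div, norm_div, norm_mul, norm_mul, norm_mul, norm_mul]
    simp only [Complex.norm_I, Complex.norm_real, Real.norm_eq_abs, one_mul, mul_one]
    simp only [div_pow, mul_pow, sq_abs, hsqrt2]
    ring
  have hFform : ∀ α : ℂ, F α = K * Pp * (‖μ21 + ((c : ℂ) - α) * μ22‖ ^ 2
      + (σ21 ^ 2 + ‖(c : ℂ) - α‖ ^ 2 * σ22 ^ 2)) + K + ‖α‖ ^ 2 * Pp := by
    intro α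
    rw [hF]
    simp only
    rw [hE α]
  -- the key quadratic identity
  have hKC : ((K : ℝ) : ℂ) + 1 ≠ 0 := by
    have h1 : ((K : ℝ) : ℂ) + 1 = ((K + 1 : ℝ) : ℂ) := by push_cast; ring
    rw [h1, Ne, Complex.ofReal_eq_zero]
    exact ne_of_gt (by linarith)
  have hs21 : ((σ21 : ℂ)) ^ 2 = 1 - μ21 * (starRingEnd ℂ) μ21 := by
    rw [← Complex.ofReal_pow, show σ21 ^ 2 = 1 - ‖μ21‖ ^ 2 by linarith [hnorm21],
      Complex.sq_norm, Complex.ofReal_sub, Complex.ofReal_one, Complex.mul_conj]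
  have hs22 : ((σ22 : ℂ)) ^ 2 = 1 - μ22 * (starRingEnd ℂ) μ22 := by
    rw [← Complex.ofReal_pow, show σ22 ^ 2 = 1 - ‖μ22‖ ^ 2 by linarith [hnorm22],
      Complex.sq_norm, Complex.ofReal_sub, Complex.ofReal_one, Complex.mul_conj]
  have hkey : ∀ w : ℂ, F w = (Pp * (K + 1)) * ‖w - αstar‖ ^ 2 + F αstar := by
    intro w
    rw [hFform w, hFform αstar]
    apply Complex.ofReal_injective
    simp only [Complex.sq_norm]
    push_cast
    simp only [← Complex.mul_conj]
    rw [hαstar]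
    simp only [map_add, map_sub, map_mul, map_div₀, map_one, Complex.conj_conj,
      Complex.conj_ofReal]
    rw [hs21, hs22]
    field_simp
    ring
  have hApos : 0 < Pp * (K + 1) := by positivity
  constructor
  · have hFeq : F = fun w => (Pp * (K + 1)) * ‖w - αstar‖ ^ 2 + F αstar :=
      funext hkey
    rw [hFeq]
    exact strictconvex_quad _ hApos _ _
  · intro z hz
    rw [hkey z]
    have : 0 < ‖z - αstar‖ ^ 2 := by
      have := norm_pos_iff.mpr (sub_ne_zero.mpr hz)
      positivity
    nlinarith [mul_pos hApos this]
end

section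
/- Let λ₁, λ₂ ≥ 0 and let G₁, G₂ be independent circularly symmetric complex Gaussian random variables with Gⱼ ~ CN(mⱼ, sⱼ²). Set X = λ₁|G₁|² + λ₂|G₂|². Then for every positive integer n, the central moment E[(X − E[X])^n] is nonnegative. -/
open MeasureTheory ProbabilityTheory Real Filter Finset

noncomputable section

lemma gaussPDF_eq (x : ℝ) : gaussianPDFReal 0 1 x = (Real.sqrt (2*π))⁻¹ * Real.exp (-x^2/2) := by
  simp [gaussianPDFReal]

lemma integral_gauss01 (f : ℝ → ℝ) :
    ∫ x, f x ∂(gaussianReal 0 1)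
      = ∫ x, ((Real.sqrt (2*π))⁻¹ * Real.exp (-x^2/2)) * f x := by
  rw [gaussianReal_of_var_ne_zero 0 one_ne_zero]
  have h : gaussianPDF 0 1 = fun x => ((gaussianPDFReal 0 1 x).toNNReal : ENNReal) := rfl
  rw [h, integral_withDensity_eq_integral_smul
    (by exact (measurable_gaussianPDFReal 0 1).real_toNNReal) f]
  congr 1
  ext x
  simp [NNReal.smul_def, Real.coe_toNNReal _ (gaussianPDFReal_nonneg 0 1 x), gaussPDF_eq]
  left; positivity

lemma integrable_gauss01_iff (f : ℝ → ℝ) :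
    Integrable f (gaussianReal 0 1)
      ↔ Integrable (fun x => f x * Real.exp (-x^2/2)) (volume : Measure ℝ) := by
  rw [gaussianReal_of_var_ne_zero 0 one_ne_zero]
  rw [integrable_withDensity_iff (measurable_gaussianPDF 0 1)
    (ae_of_all _ fun x => ENNReal.ofReal_lt_top)]
  have h : ∀ x : ℝ, (gaussianPDF 0 1 x).toReal
      = (Real.sqrt (2*π))⁻¹ * Real.exp (-x^2/2) := by
    intro x
    rw [gaussianPDF, ENNReal.toReal_ofReal (gaussianPDFReal_nonneg 0 1 x), gaussPDF_eq]
  simp_rw [h]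
  have hs : Real.sqrt (2*π) ≠ 0 := by positivity
  constructor
  · intro h'
    refine (h'.const_mul (Real.sqrt (2*π))).congr (ae_of_all _ fun x => ?_)
    field_simp
  · intro h'
    refine (h'.const_mul (Real.sqrt (2*π))⁻¹).congr (ae_of_all _ fun x => ?_)
    ring

lemma one_le_one_add_sq (x : ℝ) : (1:ℝ) ≤ 1 + x^2 := by nlinarith [sq_nonneg x]

lemma pow_exp_quarter (N : ℕ) (x : ℝ) :
    (1+x^2)^N * Real.exp (-x^2/4) ≤ 2^N * (1 + 4^N * N.factorial) := by
  have ht : (0:ℝ) ≤ x^2/4 := by positivity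
  have hfac : (0:ℝ) < N.factorial := by exact_mod_cast N.factorial_pos
  have hterm : (x^2/4)^N / N.factorial ≤ Real.exp (x^2/4) := by
    calc (x^2/4)^N / N.factorial
        ≤ ∑ i ∈ Finset.range (N+1), (x^2/4)^i / i.factorial := by
          refine Finset.single_le_sum (f := fun i => (x^2/4)^i / (i.factorial:ℝ)) ?_ ?_
          · intro i _; positivity
          · exact Finset.self_mem_range_succ N
      _ ≤ Real.exp (x^2/4) := Real.sum_le_exp_of_nonneg ht _
  have h4 : (x^2/4)^N ≤ N.factorial * Real.exp (x^2/4) := by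
    rw [div_le_iff₀ hfac] at hterm
    linarith [hterm]
  have h2 : (x^2)^N * Real.exp (-x^2/4) ≤ 4^N * N.factorial := by
    calc (x^2)^N * Real.exp (-x^2/4)
        = 4^N * (x^2/4)^N * Real.exp (-x^2/4) := by
          rw [div_pow]; field_simp
      _ ≤ 4^N * (N.factorial * Real.exp (x^2/4)) * Real.exp (-x^2/4) := by
          gcongr
      _ = 4^N * N.factorial * Real.exp (x^2/4 + -x^2/4) := by
          rw [Real.exp_add]; ring
      _ = 4^N * N.factorial := by
          have hz : x^2/4 + -x^2/4 = 0 := by ring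
          rw [hz, Real.exp_zero, mul_one]
  have hsplit : (1+x^2)^N ≤ 2^N * (1 + (x^2)^N) := by
    rcases le_total (x^2) 1 with h | h
    · calc (1+x^2)^N ≤ 2^N := by
            apply pow_le_pow_left₀ (by positivity); linarith
        _ ≤ 2^N * (1 + (x^2)^N) := by
            nlinarith [pow_pos (show (0:ℝ) < 2 by norm_num) N,
              pow_nonneg (sq_nonneg x) N]
    · calc (1+x^2)^N ≤ (2*x^2)^N := by
            apply pow_le_pow_left₀ (by positivity); linarith
        _ = 2^N * (x^2)^N := mul_pow 2 (x^2) N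
        _ ≤ 2^N * (1 + (x^2)^N) := by
            nlinarith [pow_pos (show (0:ℝ) < 2 by norm_num) N,
              pow_nonneg (sq_nonneg x) N]
  have hexple : Real.exp (-x^2/4) ≤ 1 := by
    rw [Real.exp_le_one_iff]; nlinarith [sq_nonneg x]
  calc (1+x^2)^N * Real.exp (-x^2/4)
      ≤ (2^N * (1 + (x^2)^N)) * Real.exp (-x^2/4) :=
        mul_le_mul_of_nonneg_right hsplit (Real.exp_nonneg _)
    _ = 2^N * (Real.exp (-x^2/4) + (x^2)^N * Real.exp (-x^2/4)) := by ring
    _ ≤ 2^N * (1 + 4^N * N.factorial) := by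
        apply mul_le_mul_of_nonneg_left _ (by positivity : (0:ℝ) ≤ (2:ℝ)^N)
        linarith [h2]

/-- master integrability: polynomially bounded × gaussian weight is Lebesgue-integrable -/
lemma integrable_mul_gaussWeight {f : ℝ → ℝ} (hf : AEStronglyMeasurable f (volume : Measure ℝ))
    (C : ℝ) (N : ℕ) (hb : ∀ x, |f x| ≤ C * (1+x^2)^N) :
    Integrable (fun x => f x * Real.exp (-x^2/2)) (volume : Measure ℝ) := by
  have hC : 0 ≤ C := le_trans (abs_nonneg _) (by simpa using hb 0)
  set K : ℝ := 2^N * (1 + 4^N * N.factorial) with hK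
  have hInt : Integrable (fun x : ℝ => C * K * Real.exp (-(1/4) * x^2)) volume :=
    (integrable_exp_neg_mul_sq (by norm_num : (0:ℝ) < 1/4)).const_mul _
  refine Integrable.mono' hInt
    (hf.mul ((Real.continuous_exp.comp (by continuity)).aestronglyMeasurable)) ?_
  refine ae_of_all _ fun x => ?_
  have he : Real.exp (-x^2/2) = Real.exp (-x^2/4) * Real.exp (-x^2/4) := by
    rw [← Real.exp_add]; congr 1; ring
  have h4 : Real.exp (-(1/4) * x^2) = Real.exp (-x^2/4) := by congr 1; ring
  rw [Real.norm_eq_abs, abs_mul, abs_of_nonneg (Real.exp_nonneg _), he, h4]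
  calc |f x| * (Real.exp (-x^2/4) * Real.exp (-x^2/4))
      ≤ (C * (1+x^2)^N) * (Real.exp (-x^2/4) * Real.exp (-x^2/4)) := by
        apply mul_le_mul_of_nonneg_right (hb x) (by positivity)
    _ = C * ((1+x^2)^N * Real.exp (-x^2/4)) * Real.exp (-x^2/4) := by ring
    _ ≤ C * K * Real.exp (-x^2/4) := by
        apply mul_le_mul_of_nonneg_right _ (Real.exp_nonneg _)
        exact mul_le_mul_of_nonneg_left (pow_exp_quarter N x) hC

lemma integrable_gauss01_of_poly_bound {f : ℝ → ℝ} (hf : Measurable f)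
    (C : ℝ) (N : ℕ) (hb : ∀ x, |f x| ≤ C * (1+x^2)^N) :
    Integrable f (gaussianReal 0 1) :=
  (integrable_gauss01_iff f).2 (integrable_mul_gaussWeight hf.aestronglyMeasurable C N hb)

/-- Gaussian integration by parts: `∫ x f(x) dγ = ∫ f'(x) dγ`. -/
lemma gauss01_ibp {f f' : ℝ → ℝ} (hd : ∀ x, HasDerivAt f (f' x) x)
    (h1 : Integrable (fun x => f x * Real.exp (-x^2/2)) (volume : Measure ℝ))
    (h2 : Integrable (fun x => f' x * Real.exp (-x^2/2)) (volume : Measure ℝ))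
    (h3 : Integrable (fun x => (x * f x) * Real.exp (-x^2/2)) (volume : Measure ℝ)) :
    ∫ x, x * f x ∂(gaussianReal 0 1) = ∫ x, f' x ∂(gaussianReal 0 1) := by
  rw [integral_gauss01, integral_gauss01]
  simp_rw [mul_assoc]
  rw [integral_const_mul, integral_const_mul]
  congr 1
  -- key : ∫ (f' x - x * f x) * e = 0
  have hde : ∀ x : ℝ, HasDerivAt (fun y => Real.exp (-y^2/2)) (-x * Real.exp (-x^2/2)) x := by
    intro x
    have h0 : HasDerivAt (fun y : ℝ => -y^2/2) (-x) x := by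
      have := ((hasDerivAt_pow 2 x).neg).div_const 2
      refine this.congr_deriv ?_
      ring
    have := h0.exp
    convert this using 1
    ring
  have hF : ∀ x : ℝ, HasDerivAt (fun y => f y * Real.exp (-y^2/2))
      (f' x * Real.exp (-x^2/2) - (x * f x) * Real.exp (-x^2/2)) x := by
    intro x
    have := (hd x).mul (hde x)
    refine this.congr_deriv ?_
    ring
  have hzero : ∫ x, (f' x * Real.exp (-x^2/2) - (x * f x) * Real.exp (-x^2/2)) = 0 :=
    integral_eq_zero_of_hasDerivAt_of_integrable hF (h2.sub h3) h1
  rw [integral_sub h2 h3] at hzero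
  have : ∫ x, (x * f x) * Real.exp (-x^2/2) = ∫ x, f' x * Real.exp (-x^2/2) := by linarith
  calc ∫ x, Real.exp (-x^2/2) * (x * f x)
      = ∫ x, (x * f x) * Real.exp (-x^2/2) := by simp_rw [mul_comm]
    _ = ∫ x, f' x * Real.exp (-x^2/2) := this
    _ = ∫ x, Real.exp (-x^2/2) * f' x := by simp_rw [mul_comm]

/-- the quantities `∫ (x²-1)^k x^m dγ` -/
noncomputable def Jg (k m : ℕ) : ℝ := ∫ x, (x^2-1)^k * x^m ∂(gaussianReal 0 1)

lemma Jfun_bound (k m : ℕ) (x : ℝ) : |(x^2-1)^k * x^m| ≤ 1 * (1+x^2)^(k+m) := by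
  rw [one_mul, abs_mul, abs_pow, abs_pow, pow_add]
  have h1 : |x^2-1| ≤ 1 + x^2 := by
    rw [abs_le]; constructor <;> nlinarith [sq_nonneg x]
  have h2 : |x| ≤ 1 + x^2 := by
    rcases abs_le.mp (le_refl |x|) with _
    nlinarith [sq_nonneg (|x| - 1), abs_nonneg x, sq_abs x]
  exact mul_le_mul (pow_le_pow_left₀ (abs_nonneg _) h1 k)
    (pow_le_pow_left₀ (abs_nonneg _) h2 m) (by positivity) (by positivity)

lemma Jfun_measurable (k m : ℕ) : Measurable (fun x : ℝ => (x^2-1)^k * x^m) := by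
  measurability

lemma integrable_Jfun (k m : ℕ) :
    Integrable (fun x : ℝ => (x^2-1)^k * x^m) (gaussianReal 0 1) :=
  integrable_gauss01_of_poly_bound (Jfun_measurable k m) 1 (k+m) (Jfun_bound k m)

lemma integrable_Jfun_weight (k m : ℕ) :
    Integrable (fun x : ℝ => ((x^2-1)^k * x^m) * Real.exp (-x^2/2)) (volume : Measure ℝ) :=
  integrable_mul_gaussWeight (Jfun_measurable k m).aestronglyMeasurable 1 (k+m) (Jfun_bound k m)

lemma integral_gcongr {f g : ℝ → ℝ} (h : ∀ x, f x = g x) :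
    ∫ x, f x ∂(gaussianReal 0 1) = ∫ x, g x ∂(gaussianReal 0 1) := by
  rw [funext h]

lemma Jg_rec0 (m : ℕ) : Jg 0 (m+2) = ((m:ℝ)+1) * Jg 0 m := by
  have hd : ∀ x : ℝ, HasDerivAt (fun y : ℝ => y^(m+1)) (((m:ℝ)+1) * x^m) x := by
    intro x
    have := hasDerivAt_pow (m+1) x
    refine this.congr_deriv ?_
    push_cast
    simp
  have key := gauss01_ibp (f := fun y => y^(m+1)) (f' := fun x => ((m:ℝ)+1) * x^m) hd
    ((integrable_Jfun_weight 0 (m+1)).congr (ae_of_all _ fun x => by ring))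
    (((integrable_Jfun_weight 0 m).const_mul (((m:ℝ)+1))).congr (ae_of_all _ fun x => by ring))
    ((integrable_Jfun_weight 0 (m+2)).congr (ae_of_all _ fun x => by ring))
  have h1 : ∫ x, x * x^(m+1) ∂(gaussianReal 0 1) = Jg 0 (m+2) := by
    unfold Jg; exact integral_gcongr fun x => by ring
  have h2 : ∫ x, ((m:ℝ)+1) * x^m ∂(gaussianReal 0 1) = ((m:ℝ)+1) * Jg 0 m := by
    rw [integral_const_mul]
    unfold Jg
    congr 1
    exact integral_gcongr fun x => by ring
  rw [← h1, key, h2]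

lemma Jg_rec1 (k : ℕ) : Jg (k+1) 1 = (2*((k:ℝ)+1)) * Jg k 1 := by
  have hd : ∀ x : ℝ, HasDerivAt (fun y : ℝ => (y^2-1)^(k+1))
      ((2*((k:ℝ)+1)) * ((x^2-1)^k * x)) x := by
    intro x
    have := ((hasDerivAt_pow 2 x).sub_const 1).pow (k+1)
    refine this.congr_deriv ?_
    push_cast
    simp
    ring
  have key := gauss01_ibp (f := fun y => (y^2-1)^(k+1))
    (f' := fun x => (2*((k:ℝ)+1)) * ((x^2-1)^k * x)) hd
    ((integrable_Jfun_weight (k+1) 0).congr (ae_of_all _ fun x => by ring))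
    (((integrable_Jfun_weight k 1).const_mul (2*((k:ℝ)+1))).congr (ae_of_all _ fun x => by ring))
    ((integrable_Jfun_weight (k+1) 1).congr (ae_of_all _ fun x => by ring))
  have h1 : ∫ x, x * (x^2-1)^(k+1) ∂(gaussianReal 0 1) = Jg (k+1) 1 := by
    unfold Jg; exact integral_gcongr fun x => by ring
  have h2 : ∫ x, (2*((k:ℝ)+1)) * ((x^2-1)^k * x) ∂(gaussianReal 0 1)
      = (2*((k:ℝ)+1)) * Jg k 1 := by
    rw [integral_const_mul]
    unfold Jg
    congr 1
    exact integral_gcongr fun x => by ring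
  rw [← h1, key, h2]

lemma Jg_rec2 (k m : ℕ) : Jg (k+1) (m+2)
    = (2*((k:ℝ)+1)) * Jg k (m+2) + ((m:ℝ)+1) * Jg (k+1) m := by
  have hd : ∀ x : ℝ, HasDerivAt (fun y : ℝ => (y^2-1)^(k+1) * y^(m+1))
      ((2*((k:ℝ)+1)) * ((x^2-1)^k * x^(m+2)) + ((m:ℝ)+1) * ((x^2-1)^(k+1) * x^m)) x := by
    intro x
    have hu := ((hasDerivAt_pow 2 x).sub_const 1).pow (k+1)
    have hv := hasDerivAt_pow (m+1) x
    have := hu.mul hv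
    refine this.congr_deriv ?_
    push_cast
    simp
    ring
  have key := gauss01_ibp (f := fun y => (y^2-1)^(k+1) * y^(m+1))
    (f' := fun x => (2*((k:ℝ)+1)) * ((x^2-1)^k * x^(m+2))
      + ((m:ℝ)+1) * ((x^2-1)^(k+1) * x^m)) hd
    ((integrable_Jfun_weight (k+1) (m+1)).congr (ae_of_all _ fun x => by ring))
    ((((integrable_Jfun_weight k (m+2)).const_mul (2*((k:ℝ)+1))).add
      ((integrable_Jfun_weight (k+1) m).const_mul ((m:ℝ)+1))).congr
        (ae_of_all _ fun x => by simp only [Pi.add_apply]; ring))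
    ((integrable_Jfun_weight (k+1) (m+2)).congr (ae_of_all _ fun x => by ring))
  have h1 : ∫ x, x * ((x^2-1)^(k+1) * x^(m+1)) ∂(gaussianReal 0 1) = Jg (k+1) (m+2) := by
    unfold Jg; exact integral_gcongr fun x => by ring
  have h2 : ∫ x, ((2*((k:ℝ)+1)) * ((x^2-1)^k * x^(m+2))
        + ((m:ℝ)+1) * ((x^2-1)^(k+1) * x^m)) ∂(gaussianReal 0 1)
      = (2*((k:ℝ)+1)) * Jg k (m+2) + ((m:ℝ)+1) * Jg (k+1) m := by
    rw [integral_add ((integrable_Jfun k (m+2)).const_mul _)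
      ((integrable_Jfun (k+1) m).const_mul _), integral_const_mul, integral_const_mul]
    rfl
  rw [← h1, key, h2]

lemma Jg00 : Jg 0 0 = 1 := by
  have : (fun x : ℝ => (x^2-1)^0 * x^0) = fun _ => (1:ℝ) := by funext x; ring
  rw [Jg, this, integral_const]
  simp

lemma Jg01 : Jg 0 1 = 0 := by
  have hd : ∀ x : ℝ, HasDerivAt (fun _ : ℝ => (1:ℝ)) ((fun _ : ℝ => (0:ℝ)) x) x :=
    fun x => hasDerivAt_const x 1
  have key := gauss01_ibp hd
    ((integrable_Jfun_weight 0 0).congr (ae_of_all _ fun x => by ring))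
    ((integrable_Jfun_weight 0 0).const_mul 0 |>.congr (ae_of_all _ fun x => by ring))
    ((integrable_Jfun_weight 0 1).congr (ae_of_all _ fun x => by ring))
  have h1 : ∫ x, x * (1:ℝ) ∂(gaussianReal 0 1) = Jg 0 1 := by
    unfold Jg; exact integral_gcongr fun x => by ring
  rw [← h1, key]
  simp

lemma Jg10 : Jg 1 0 = 0 := by
  have hsub : Jg 1 0 = Jg 0 2 - Jg 0 0 := by
    have h : (fun x : ℝ => (x^2-1)^1 * x^0)
        = fun x : ℝ => (x^2-1)^0 * x^2 - (x^2-1)^0 * x^0 := by funext x; ring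
    rw [Jg, h, integral_sub (integrable_Jfun 0 2) (integrable_Jfun 0 0)]
    rfl
  have h02 : Jg 0 2 = 1 := by
    have := Jg_rec0 0
    rw [Jg00] at this
    simpa using this
  rw [hsub, h02, Jg00]
  ring

lemma Jg_m0 (k : ℕ) : Jg (k+2) 0 = (2*((k:ℝ)+1)) * Jg k 2 := by
  have hsub : Jg (k+2) 0 = Jg (k+1) 2 - Jg (k+1) 0 := by
    have h : (fun x : ℝ => (x^2-1)^(k+2) * x^0)
        = fun x : ℝ => (x^2-1)^(k+1) * x^2 - (x^2-1)^(k+1) * x^0 := by funext x; ring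
    rw [Jg, h, integral_sub (integrable_Jfun (k+1) 2) (integrable_Jfun (k+1) 0)]
    rfl
  have := Jg_rec2 k 0
  rw [hsub, this]
  push_cast
  ring

lemma Jg_odd : ∀ k m : ℕ, Jg k (2*m+1) = 0 := by
  intro k
  induction k with
  | zero =>
    intro m
    induction m with
    | zero => simpa using Jg01
    | succ m ih =>
      have h : 2*(m+1)+1 = (2*m+1)+2 := by ring
      rw [h, Jg_rec0 (2*m+1), ih, mul_zero]
  | succ k ihk =>
    intro m
    induction m with
    | zero =>
      have h1 : 2*0+1 = 1 := by norm_num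
      rw [h1, Jg_rec1 k]
      have := ihk 0
      rw [h1] at this
      rw [this, mul_zero]
    | succ m ihm =>
      have h : 2*(m+1)+1 = (2*m+1)+2 := by ring
      rw [h, Jg_rec2 k (2*m+1)]
      have h2 : Jg k (2*m+1+2) = 0 := by
        have := ihk (m+1)
        rwa [show 2*(m+1)+1 = 2*m+1+2 by ring] at this
      rw [h2, ihm, mul_zero, mul_zero, add_zero]

lemma Jg_nonneg : ∀ k m : ℕ, 0 ≤ Jg k m := by
  intro k
  induction k using Nat.strong_induction_on with
  | _ k ihk =>
    intro m
    induction m using Nat.strong_induction_on with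
    | _ m ihm =>
      rcases m with _ | (_ | m)
      · -- m = 0
        rcases k with _ | (_ | k)
        · rw [Jg00]; norm_num
        · rw [Jg10]
        · rw [Jg_m0 k]
          have hk : k < k+2 := by omega
          exact mul_nonneg (by positivity) (ihk k hk 2)
      · -- m = 1
        rcases k with _ | k
        · rw [Jg01]
        · rw [Jg_rec1 k]
          exact mul_nonneg (by positivity) (ihk k (by omega) 1)
      · -- m = m + 2
        rcases k with _ | k
        · rw [Jg_rec0 m]
          exact mul_nonneg (by positivity) (ihm m (by omega))
        · rw [Jg_rec2 k m]
          exact add_nonneg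
            (mul_nonneg (by positivity) (ihk k (by omega) (m+2)))
            (mul_nonneg (by positivity) (ihm m (by omega)))

lemma qfun_expand (α β : ℝ) (k : ℕ) :
    (fun x : ℝ => (α*(x^2-1)+β*x)^k)
      = fun x => ∑ i ∈ Finset.range (k+1),
          (α^i * β^(k-i) * (k.choose i : ℝ)) * ((x^2-1)^i * x^(k-i)) := by
  funext x
  rw [add_pow]
  refine Finset.sum_congr rfl fun i _ => ?_
  rw [mul_pow, mul_pow]
  ring

lemma integrable_qfun_pow (α β : ℝ) (k : ℕ) :
    Integrable (fun x : ℝ => (α*(x^2-1)+β*x)^k) (gaussianReal 0 1) := by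
  refine integrable_gauss01_of_poly_bound ((((measurable_id.pow_const 2).sub_const 1).const_mul α |>.add (measurable_id.const_mul β)).pow_const k) ((|α|+|β|)^k) k fun x => ?_
  rw [abs_pow, ← mul_pow]
  refine pow_le_pow_left₀ (abs_nonneg _) ?_ k
  calc |α*(x^2-1)+β*x| ≤ |α| * |x^2-1| + |β| * |x| := by
        refine le_trans (abs_add_le _ _) ?_
        rw [abs_mul, abs_mul]
    _ ≤ |α| * (1+x^2) + |β| * (1+x^2) := by
        have h1 : |x^2-1| ≤ 1 + x^2 := by
          rw [abs_le]; constructor <;> nlinarith [sq_nonneg x]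
        have h2 : |x| ≤ 1 + x^2 := by
          nlinarith [sq_nonneg (|x| - 1), abs_nonneg x, sq_abs x]
        exact add_le_add (mul_le_mul_of_nonneg_left h1 (abs_nonneg _))
          (mul_le_mul_of_nonneg_left h2 (abs_nonneg _))
    _ = (|α|+|β|) * (1+x^2) := by ring

lemma crux_nonneg (α β : ℝ) (hα : 0 ≤ α) (k : ℕ) :
    0 ≤ ∫ x, (α*(x^2-1)+β*x)^k ∂(gaussianReal 0 1) := by
  rw [qfun_expand α β k,
    integral_finset_sum _ (fun i _ => (integrable_Jfun i (k-i)).const_mul _)]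
  refine Finset.sum_nonneg fun i _ => ?_
  rw [integral_const_mul]
  have hJ : ∫ x, (x^2-1)^i * x^(k-i) ∂(gaussianReal 0 1) = Jg i (k-i) := rfl
  rw [hJ]
  rcases Nat.even_or_odd (k-i) with he | ho
  · refine mul_nonneg (mul_nonneg (mul_nonneg (pow_nonneg hα i) (he.pow_nonneg β)) ?_)
      (Jg_nonneg i (k-i))
    positivity
  · obtain ⟨j, hj⟩ := ho
    rw [hj, Jg_odd i j, mul_zero]

lemma crux_mean (α β : ℝ) :
    ∫ x, (α*(x^2-1)+β*x) ∂(gaussianReal 0 1) = 0 := by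
  have h : (fun x : ℝ => α*(x^2-1)+β*x)
      = fun x => α * ((x^2-1)^1 * x^0) + β * ((x^2-1)^0 * x^1) := by
    funext x; ring
  rw [h, integral_add ((integrable_Jfun 1 0).const_mul _) ((integrable_Jfun 0 1).const_mul _),
    integral_const_mul, integral_const_mul]
  have h1 : ∫ x, (x^2-1)^1 * x^0 ∂(gaussianReal 0 1) = Jg 1 0 := rfl
  have h2 : ∫ x, (x^2-1)^0 * x^1 ∂(gaussianReal 0 1) = Jg 0 1 := rfl
  rw [h1, h2, Jg10, Jg01]
  ring

section Transfer
variable {Ω : Type*} [MeasureSpace Ω] [IsProbabilityMeasure (ℙ : Measure Ω)]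

lemma integral_comp_gauss {g : Ω → ℝ} (hg : Measurable g)
    (hmap : Measure.map g ℙ = gaussianReal 0 1) {φ : ℝ → ℝ} (hφm : Measurable φ) :
    ∫ ω, φ (g ω) ∂ℙ = ∫ x, φ x ∂(gaussianReal 0 1) := by
  rw [← hmap]
  exact (integral_map hg.aemeasurable
    (by rw [hmap]; exact hφm.aestronglyMeasurable)).symm

lemma integrable_comp_gauss {g : Ω → ℝ} (hg : Measurable g)
    (hmap : Measure.map g ℙ = gaussianReal 0 1) {φ : ℝ → ℝ} (hφm : Measurable φ)
    (hint : Integrable φ (gaussianReal 0 1)) :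
    Integrable (fun ω => φ (g ω)) ℙ := by
  have h := integrable_map_measure
    (f := g) (μ := (ℙ : Measure Ω)) (g := φ)
    (by rw [hmap]; exact hφm.aestronglyMeasurable) hg.aemeasurable
  rw [hmap] at h
  exact h.mp hint

lemma mom_add {U V : Ω → ℝ} (hUmeas : Measurable U) (hVmeas : Measurable V)
    (hUV : IndepFun U V ℙ)
    (hU : ∀ k : ℕ, Integrable (fun ω => U ω ^ k) ℙ ∧ 0 ≤ ∫ ω, U ω ^ k ∂ℙ)
    (hV : ∀ k : ℕ, Integrable (fun ω => V ω ^ k) ℙ ∧ 0 ≤ ∫ ω, V ω ^ k ∂ℙ) :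
    ∀ k : ℕ, Integrable (fun ω => (U ω + V ω) ^ k) ℙ ∧ 0 ≤ ∫ ω, (U ω + V ω) ^ k ∂ℙ := by
  intro k
  have hexp : (fun ω => (U ω + V ω)^k)
      = fun ω => ∑ i ∈ Finset.range (k+1), (U ω^i * V ω^(k-i)) * (k.choose i : ℝ) :=
    funext fun ω => by rw [add_pow]
  have hind : ∀ i j : ℕ, IndepFun (fun ω => U ω ^ i) (fun ω => V ω ^ j) ℙ :=
    fun i j => hUV.comp (measurable_id.pow_const i) (measurable_id.pow_const j)
  have hterm : ∀ i, Integrable (fun ω => U ω^i * V ω^(k-i)) ℙ := fun i =>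
    (hind i (k-i)).integrable_mul (hU i).1 (hV (k-i)).1
  constructor
  · rw [hexp]
    exact integrable_finset_sum _ (fun i _ => (hterm i).mul_const _)
  · rw [hexp, integral_finset_sum _ (fun i _ => (hterm i).mul_const _)]
    refine Finset.sum_nonneg fun i _ => ?_
    rw [integral_mul_const]
    have hmul : ∫ ω, U ω^i * V ω^(k-i) ∂ℙ = (∫ ω, U ω^i ∂ℙ) * ∫ ω, V ω^(k-i) ∂ℙ :=
      (hind i (k-i)).integral_fun_mul_eq_mul_integral (hUmeas.pow_const i).aestronglyMeasurable
        (hVmeas.pow_const (k-i)).aestronglyMeasurable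
    rw [hmul]
    exact mul_nonneg (mul_nonneg (hU i).2 (hV (k-i)).2) (Nat.cast_nonneg _)

end Transfer

lemma absSq_decomp (m : ℂ) (s t u : ℝ) :
    ‖m + (s:ℂ) * ((t:ℂ) + Complex.I*(u:ℂ)) / (Real.sqrt 2 : ℂ)‖^2
      = (‖m‖^2 + s^2)
        + ((s^2/2)*(t^2-1) + (s*Real.sqrt 2*m.re)*t)
        + ((s^2/2)*(u^2-1) + (s*Real.sqrt 2*m.im)*u) := by
  have h2 : (Real.sqrt 2)^2 = 2 := Real.sq_sqrt (by norm_num)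
  have hs0 : Real.sqrt 2 ≠ 0 := by positivity
  rw [Complex.sq_norm, Complex.sq_norm, Complex.normSq_apply, Complex.normSq_apply]
  have hre : (m + (s:ℂ) * ((t:ℂ) + Complex.I*(u:ℂ)) / (Real.sqrt 2 : ℂ)).re
      = m.re + s * t / Real.sqrt 2 := by
    simp [Complex.add_re, Complex.div_re, Complex.mul_re, Complex.normSq_apply]
    field_simp
    have h2' : Real.sqrt 2 * Real.sqrt 2 = 2 := Real.mul_self_sqrt (by norm_num)
    rw [h2]
  have him : (m + (s:ℂ) * ((t:ℂ) + Complex.I*(u:ℂ)) / (Real.sqrt 2 : ℂ)).im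
      = m.im + s * u / Real.sqrt 2 := by
    simp [Complex.add_im, Complex.div_im, Complex.mul_im, Complex.normSq_apply]
    field_simp
    have h2' : Real.sqrt 2 * Real.sqrt 2 = 2 := Real.mul_self_sqrt (by norm_num)
    rw [h2]
  rw [hre, him]
  field_simp
  linear_combination (-(s^2*(t^2+u^2) + 2*Real.sqrt 2*(m.re*s*t+m.im*s*u))) * h2



open MeasureTheory ProbabilityTheory

/-- All central moments of a positive semidefinite Gaussian quadratic form
`X = λ₁|G₁|² + λ₂|G₂|²` (with `G₁, G₂` independent circularly symmetric complex
Gaussians) are nonnegative. -/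
theorem central_moments_nonneg_of_gaussian_quadratic_form
    {Ω : Type*} [MeasureSpace Ω] [IsProbabilityMeasure (ℙ : Measure Ω)]
    (lam₁ lam₂ : ℝ) (hlam₁ : 0 ≤ lam₁) (hlam₂ : 0 ≤ lam₂)
    (m₁ m₂ : ℂ) (s₁ s₂ : ℝ)
    (g : Fin 4 → Ω → ℝ) (hgmeas : ∀ i, Measurable (g i))
    (hindep : iIndepFun g ℙ)
    (hgauss : ∀ i, Measure.map (g i) ℙ = gaussianReal 0 1)
    (G₁ G₂ : Ω → ℂ)
    (hG₁ : G₁ = fun ω => m₁ + (s₁ : ℂ) * (g 0 ω + Complex.I * g 1 ω) / (Real.sqrt 2 : ℂ))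
    (hG₂ : G₂ = fun ω => m₂ + (s₂ : ℂ) * (g 2 ω + Complex.I * g 3 ω) / (Real.sqrt 2 : ℂ))
    (X : Ω → ℝ)
    (hX : X = fun ω => lam₁ * ‖G₁ ω‖ ^ 2 + lam₂ * ‖G₂ ω‖ ^ 2)
    (n : ℕ) (hn : 0 < n) :
    0 ≤ ∫ ω, (X ω - ∫ ω', X ω' ∂ℙ) ^ n ∂ℙ := by
  classical
  set A : Fin 4 → ℝ := ![lam₁*(s₁^2/2), lam₁*(s₁^2/2), lam₂*(s₂^2/2), lam₂*(s₂^2/2)] with hAdef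
  set B : Fin 4 → ℝ := ![lam₁*(s₁*Real.sqrt 2*m₁.re), lam₁*(s₁*Real.sqrt 2*m₁.im),
      lam₂*(s₂*Real.sqrt 2*m₂.re), lam₂*(s₂*Real.sqrt 2*m₂.im)] with hBdef
  set φ : Fin 4 → ℝ → ℝ := fun i x => A i * (x^2-1) + B i * x with hφdef
  set Y : Fin 4 → Ω → ℝ := fun i => (φ i) ∘ (g i) with hYdef
  have hφmeas : ∀ i, Measurable (φ i) := fun i =>
    (((measurable_id.pow_const 2).sub_const 1).const_mul (A i)).add
      (measurable_id.const_mul (B i))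
  have hYmeas : ∀ i, Measurable (Y i) := fun i => (hφmeas i).comp (hgmeas i)
  have hA : ∀ i, 0 ≤ A i := by
    intro i
    fin_cases i <;> simp [hAdef] <;> positivity
  have hmom : ∀ (i : Fin 4) (k : ℕ),
      Integrable (fun ω => Y i ω ^ k) ℙ ∧ 0 ≤ ∫ ω, Y i ω ^ k ∂ℙ := by
    intro i k
    have hφm : Measurable (fun x => (A i * (x^2-1) + B i * x)^k) :=
      ((hφmeas i).pow_const k)
    constructor
    · exact integrable_comp_gauss (hgmeas i) (hgauss i) hφm
        (integrable_qfun_pow (A i) (B i) k)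
    · have h := integral_comp_gauss (hgmeas i) (hgauss i) hφm
        (φ := fun x => (A i * (x^2-1) + B i * x)^k)
      rw [show (fun ω => Y i ω ^ k)
          = fun ω => (fun x => (A i * (x^2-1) + B i * x)^k) (g i ω) from rfl, h]
      exact crux_nonneg (A i) (B i) (hA i) k
  have hYindep : iIndepFun Y ℙ :=
    hindep.comp φ hφmeas
  have hUVindep : IndepFun (fun ω => Y 0 ω + Y 1 ω) (fun ω => Y 2 ω + Y 3 ω) ℙ := by
    have := hYindep.indepFun_add_add hYmeas 0 1 2 3
      (by decide) (by decide) (by decide) (by decide)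
    exact this
  have hmomU := mom_add (hYmeas 0) (hYmeas 1)
    (hYindep.indepFun (show (0 : Fin 4) ≠ 1 by decide)) (hmom 0) (hmom 1)
  have hmomV := mom_add (hYmeas 2) (hYmeas 3)
    (hYindep.indepFun (show (2 : Fin 4) ≠ 3 by decide)) (hmom 2) (hmom 3)
  have hmomS := mom_add ((hYmeas 0).add (hYmeas 1)) ((hYmeas 2).add (hYmeas 3))
    hUVindep hmomU hmomV
  set C₀ : ℝ := lam₁*(‖m₁‖^2 + s₁^2) + lam₂*(‖m₂‖^2 + s₂^2) with hC₀
  have hpoint : ∀ ω, X ω = C₀ + ((Y 0 ω + Y 1 ω) + (Y 2 ω + Y 3 ω)) := by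
    intro ω
    simp only [hX, hG₁, hG₂]
    rw [absSq_decomp m₁ s₁ (g 0 ω) (g 1 ω), absSq_decomp m₂ s₂ (g 2 ω) (g 3 ω)]
    simp only [hYdef, hφdef, hAdef, hBdef, Function.comp_apply,
      Matrix.cons_val_zero, Matrix.cons_val_one, Matrix.head_cons,
      Matrix.cons_val_two, Matrix.tail_cons, Matrix.cons_val_three]
    ring
  have hYint1 : ∀ i, Integrable (Y i) ℙ := by
    intro i
    have := (hmom i 1).1
    simpa using this
  have hYmean : ∀ i, ∫ ω, Y i ω ∂ℙ = 0 := by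
    intro i
    have h := integral_comp_gauss (hgmeas i) (hgauss i) (hφmeas i)
      (φ := fun x => A i * (x^2-1) + B i * x)
    rw [show (fun ω => Y i ω) = fun ω => (fun x => A i * (x^2-1) + B i * x) (g i ω) from rfl]
    rw [h]
    exact crux_mean (A i) (B i)
  have hEX : ∫ ω, X ω ∂ℙ = C₀ := by
    rw [integral_congr_ae (ae_of_all _ hpoint)]
    have h01 : Integrable (fun a : Ω => Y 0 a + Y 1 a) ℙ := (hYint1 0).add (hYint1 1)
    have h23 : Integrable (fun a : Ω => Y 2 a + Y 3 a) ℙ := (hYint1 2).add (hYint1 3)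
    have hs : Integrable (fun a : Ω => Y 0 a + Y 1 a + (Y 2 a + Y 3 a)) ℙ := h01.add h23
    rw [integral_add (integrable_const C₀) hs, integral_add h01 h23,
      integral_add (hYint1 0) (hYint1 1), integral_add (hYint1 2) (hYint1 3),
      hYmean 0, hYmean 1, hYmean 2, hYmean 3, integral_const]
    simp
  have hfinal : (fun ω => (X ω - ∫ ω', X ω' ∂ℙ)^n)
      = fun ω => ((Y 0 ω + Y 1 ω) + (Y 2 ω + Y 3 ω))^n := by
    funext ω
    rw [hEX, hpoint ω]
    ring
  rw [hfinal]
  exact (hmomS n).2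
end
end

section
/- For every a > 0 with a ≠ 1 and every x > 0, it holds that (1 − e^{−s_a x})^a < γ(a,x)/Γ(a), where γ(a,x) = ∫₀ˣ t^{a−1}e^{−t} dt is the lower incomplete gamma function, Γ is the gamma function, and s_a = 1 if 0 < a < 1 and s_a = (Γ(1+a))^{−1/a} if a > 1. -/
open Real Set Filter MeasureTheory intervalIntegral

namespace AlzerAux

/-- the integrand of the lower incomplete gamma function -/
noncomputable def f (a t : ℝ) : ℝ := t ^ (a - 1) * Real.exp (-t)

/-- the lower incomplete gamma function -/
noncomputable def ig (a x : ℝ) : ℝ := ∫ t in (0:ℝ)..x, f a t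

/-- the comparison function -/
noncomputable def ub (a s x : ℝ) : ℝ := Real.Gamma a * (1 - Real.exp (-(s * x))) ^ a

/-- the difference -/
noncomputable def GG (a s x : ℝ) : ℝ := ig a x - ub a s x

/-- the derivative of `GG` -/
noncomputable def gg (a s x : ℝ) : ℝ :=
  f a x - Real.Gamma (a + 1) * s * Real.exp (-(s * x)) * (1 - Real.exp (-(s * x))) ^ (a - 1)

/-- log-ratio of the two terms of `gg` -/
noncomputable def psi (a s x : ℝ) : ℝ :=
  (a - 1) * (Real.log x - Real.log (1 - Real.exp (-(s * x)))) + (s - 1) * x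
    - Real.log (Real.Gamma (a + 1) * s)

/-- the derivative of `psi` -/
noncomputable def DD (a s x : ℝ) : ℝ :=
  (a - 1) * (1 / x - s * Real.exp (-(s * x)) / (1 - Real.exp (-(s * x)))) + (s - 1)

lemma u_pos {s x : ℝ} (hs : 0 < s) (hx : 0 < x) : 0 < 1 - Real.exp (-(s * x)) := by
  have : Real.exp (-(s * x)) < 1 := Real.exp_lt_one_iff.mpr (by nlinarith)
  linarith

lemma u_hasDeriv (s x : ℝ) :
    HasDerivAt (fun y => 1 - Real.exp (-(s * y))) (s * Real.exp (-(s * x))) x := by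
  have h1 : HasDerivAt (fun y : ℝ => -(s * y)) (-s) x := by
    simpa using ((hasDerivAt_id x).const_mul (-s))
  have h3 := (h1.exp).const_sub 1
  exact h3.congr_deriv (by ring)

lemma f_pos {a t : ℝ} (ht : 0 < t) : 0 < f a t :=
  mul_pos (Real.rpow_pos_of_pos ht _) (Real.exp_pos _)

lemma B_pos {a s x : ℝ} (ha : 0 < a) (hs : 0 < s) (hx : 0 < x) :
    0 < Real.Gamma (a + 1) * s * Real.exp (-(s * x)) * (1 - Real.exp (-(s * x))) ^ (a - 1) := by
  have h1 : 0 < Real.Gamma (a + 1) := Real.Gamma_pos_of_pos (by linarith)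
  have h2 := u_pos hs hx
  positivity

lemma f_contOn (a : ℝ) : ContinuousOn (f a) (Ioi 0) := by
  apply ContinuousOn.mul
  · exact fun t ht => (Real.continuousAt_rpow_const t _ (Or.inl (ne_of_gt ht))).continuousWithinAt
  · exact (Real.continuous_exp.comp continuous_neg).continuousOn

lemma f_integrableOn {a : ℝ} (ha : 0 < a) : IntegrableOn (f a) (Ioi 0) :=
  (Real.GammaIntegral_convergent ha).congr_fun (fun t _ => mul_comm _ _) measurableSet_Ioi

lemma integral_f {a : ℝ} (ha : 0 < a) : ∫ t in Ioi (0:ℝ), f a t = Real.Gamma a := by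
  rw [Real.Gamma_eq_integral ha]
  exact setIntegral_congr_fun measurableSet_Ioi (fun t _ => mul_comm _ _)

lemma f_intervalIntegrable {a : ℝ} (ha : 0 < a) {x : ℝ} (hx : 0 ≤ x) :
    IntervalIntegrable (f a) volume 0 x := by
  rw [intervalIntegrable_iff, uIoc_of_le hx]
  exact (f_integrableOn ha).mono_set Ioc_subset_Ioi_self

lemma ig_hasDeriv {a x : ℝ} (ha : 0 < a) (hx : 0 < x) : HasDerivAt (ig a) (f a x) x :=
  integral_hasDerivAt_right (f_intervalIntegrable ha hx.le)
    (ContinuousOn.stronglyMeasurableAtFilter isOpen_Ioi (f_contOn a) x hx)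
    (((f_contOn a).continuousAt (isOpen_Ioi.mem_nhds hx)))

lemma ub_hasDeriv {a s x : ℝ} (ha : 0 < a) (hs : 0 < s) (hx : 0 < x) :
    HasDerivAt (ub a s)
      (Real.Gamma (a + 1) * s * Real.exp (-(s * x)) * (1 - Real.exp (-(s * x))) ^ (a - 1)) x := by
  have hu := u_hasDeriv s x
  have h4 := (hu.rpow_const (p := a) (Or.inl (ne_of_gt (u_pos hs hx))))
  have h5 := h4.const_mul (Real.Gamma a)
  refine h5.congr_deriv ?_
  rw [Real.Gamma_add_one (ne_of_gt ha)]
  ring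

lemma GG_hasDeriv {a s x : ℝ} (ha : 0 < a) (hs : 0 < s) (hx : 0 < x) :
    HasDerivAt (GG a s) (gg a s x) x :=
  (ig_hasDeriv ha hx).sub (ub_hasDeriv ha hs hx)

lemma psi_eq {a s x : ℝ} (ha : 0 < a) (hs : 0 < s) (hx : 0 < x) :
    psi a s x = Real.log (f a x)
      - Real.log (Real.Gamma (a + 1) * s * Real.exp (-(s * x))
          * (1 - Real.exp (-(s * x))) ^ (a - 1)) := by
  have h1 : 0 < Real.Gamma (a + 1) := Real.Gamma_pos_of_pos (by linarith)
  have h2 := u_pos hs hx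
  have e1 : Real.log (f a x) = (a - 1) * Real.log x - x := by
    unfold f
    rw [Real.log_mul (by positivity) (Real.exp_ne_zero _), Real.log_rpow hx, Real.log_exp]
    ring
  have e2 : Real.log (Real.Gamma (a + 1) * s * Real.exp (-(s * x))
      * (1 - Real.exp (-(s * x))) ^ (a - 1))
      = Real.log (Real.Gamma (a + 1) * s) + (-(s * x)) + (a - 1) * Real.log (1 - Real.exp (-(s * x))) := by
    rw [Real.log_mul (by positivity) (by positivity),
      Real.log_mul (by positivity) (Real.exp_ne_zero _), Real.log_exp, Real.log_rpow h2]
  rw [e1, e2]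
  unfold psi
  ring

lemma gg_pos_iff {a s x : ℝ} (ha : 0 < a) (hs : 0 < s) (hx : 0 < x) :
    0 < gg a s x ↔ 0 < psi a s x := by
  unfold gg
  rw [sub_pos, psi_eq ha hs hx, sub_pos, Real.log_lt_log_iff (B_pos ha hs hx) (f_pos hx)]

lemma gg_neg_iff {a s x : ℝ} (ha : 0 < a) (hs : 0 < s) (hx : 0 < x) :
    gg a s x < 0 ↔ psi a s x < 0 := by
  unfold gg
  rw [sub_lt_zero, psi_eq ha hs hx, sub_lt_zero,
    Real.log_lt_log_iff (f_pos hx) (B_pos ha hs hx)]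

lemma psi_hasDeriv {a s x : ℝ} (hs : 0 < s) (hx : 0 < x) :
    HasDerivAt (psi a s) (DD a s x) x := by
  have hlog := Real.hasDerivAt_log (ne_of_gt hx)
  have hlogu := (u_hasDeriv s x).log (ne_of_gt (u_pos hs hx))
  have hid : HasDerivAt (fun y : ℝ => (s - 1) * y) (s - 1) x := by
    simpa using ((hasDerivAt_id x).const_mul (s - 1))
  have H := (((hlog.sub hlogu).const_mul (a - 1)).add hid).sub_const
    (Real.log (Real.Gamma (a + 1) * s))
  refine H.congr_deriv ?_
  unfold DD
  field_simp

lemma w_antiOn : StrictAntiOn (fun t : ℝ => 1 / t - 1 / (Real.exp t - 1)) (Ioi 0) := by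
  have hne : ∀ t : ℝ, t ∈ Ioi (0:ℝ) → Real.exp t - 1 ≠ 0 := by
    intro t ht
    have ht' : (0:ℝ) < t := mem_Ioi.mp ht
    have := Real.add_one_lt_exp (ne_of_gt ht')
    exact ne_of_gt (by linarith)
  apply strictAntiOn_of_deriv_neg (convex_Ioi 0)
  · apply ContinuousOn.sub
    · exact continuousOn_const.div continuousOn_id (fun t ht => ne_of_gt (mem_Ioi.mp ht))
    · exact continuousOn_const.div
        ((Real.continuous_exp.continuousOn).sub continuousOn_const) hne
  · rw [interior_Ioi]
    intro t ht
    have ht' : (0:ℝ) < t := mem_Ioi.mp ht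
    have hM : 0 < Real.exp t - 1 := by
      have := Real.add_one_lt_exp (ne_of_gt ht'); linarith
    have h1 : HasDerivAt (fun t : ℝ => 1 / t) (-(1 / t ^ 2)) t := by
      simpa [one_div] using hasDerivAt_inv (ne_of_gt ht')
    have h2 : HasDerivAt (fun t : ℝ => 1 / (Real.exp t - 1))
        (-(Real.exp t) / (Real.exp t - 1) ^ 2) t := by
      have h := ((Real.hasDerivAt_exp t).sub_const 1).inv (ne_of_gt hM)
      simp only [one_div]; exact h
    have hD : HasDerivAt (fun t : ℝ => 1 / t - 1 / (Real.exp t - 1)) _ t := h1.sub h2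
    rw [hD.deriv]
    set E := Real.exp (t / 2) with hE
    have hEpos : 0 < E := Real.exp_pos _
    have hE2 : E * E = Real.exp t := by
      rw [hE, ← Real.exp_add]; norm_num
    have hsinh : t / 2 < Real.sinh (t / 2) := Real.self_lt_sinh_iff.mpr (by linarith)
    have hsinh' : Real.sinh (t / 2) = (E - E⁻¹) / 2 := by
      rw [Real.sinh_eq, hE, Real.exp_neg]
    have hkey : t * E < Real.exp t - 1 := by
      rw [hsinh'] at hsinh
      have h3 : t < E - E⁻¹ := by linarith
      have h4 : t * E < (E - E⁻¹) * E := (mul_lt_mul_iff_left₀ hEpos).mpr h3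
      have h5 : (E - E⁻¹) * E = Real.exp t - 1 := by
        field_simp
        linarith [hE2]
      linarith
    have hkey2 : t ^ 2 * Real.exp t < (Real.exp t - 1) ^ 2 := by
      have h0 : 0 < t * E := mul_pos ht' hEpos
      nlinarith [hkey, h0, hE2]
    have hlt : Real.exp t / (Real.exp t - 1) ^ 2 < 1 / t ^ 2 := by
      rw [div_lt_div_iff₀ (by positivity) (by positivity)]
      nlinarith [hkey2]
    have hrw : -(Real.exp t) / (Real.exp t - 1) ^ 2 = -(Real.exp t / (Real.exp t - 1) ^ 2) :=
      neg_div _ _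
    rw [hrw]
    linarith

lemma bracket_eq {s z : ℝ} (hs : 0 < s) (hz : 0 < z) :
    1 / z - s * Real.exp (-(s * z)) / (1 - Real.exp (-(s * z)))
      = s * (1 / (s * z) - 1 / (Real.exp (s * z) - 1)) := by
  have hsz : 0 < s * z := mul_pos hs hz
  have h1 : 0 < 1 - Real.exp (-(s * z)) := u_pos hs hz
  have h2 : 0 < Real.exp (s * z) - 1 := by
    have := Real.add_one_lt_exp (ne_of_gt hsz); linarith
  rw [Real.exp_neg] at h1 ⊢
  have h3 : (0:ℝ) < Real.exp (s * z) := Real.exp_pos _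
  field_simp

lemma DD_antiOn {a s : ℝ} (ha1 : 1 < a) (hs : 0 < s) : StrictAntiOn (DD a s) (Ioi 0) := by
  intro x hx y hy hxy
  have hx' := mem_Ioi.mp hx
  have hy' := mem_Ioi.mp hy
  have hw := w_antiOn (mem_Ioi.mpr (mul_pos hs hx')) (mem_Ioi.mpr (mul_pos hs hy'))
    ((mul_lt_mul_iff_right₀ hs).mpr hxy)
  simp only at hw
  unfold DD
  rw [bracket_eq hs hx', bracket_eq hs hy']
  have := mul_lt_mul_of_pos_left hw (mul_pos (by linarith : (0:ℝ) < a - 1) hs)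
  nlinarith

lemma DD_neg {a x : ℝ} (ha1 : a < 1) (hx : 0 < x) : DD a 1 x < 0 := by
  have hx1 : (0:ℝ) < 1 * x := by linarith
  have h2 : 0 < Real.exp (1 * x) - 1 := by
    have := Real.add_one_lt_exp (ne_of_gt hx1); linarith
  have hw : 0 < 1 / (1 * x) - 1 / (Real.exp (1 * x) - 1) := by
    rw [sub_pos]
    apply one_div_lt_one_div_of_lt hx1
    have := Real.add_one_lt_exp (ne_of_gt hx1); linarith
  unfold DD
  rw [bracket_eq one_pos hx]
  nlinarith

lemma psi_tendsto {a s : ℝ} (hs : 0 < s) :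
    Tendsto (psi a s) (nhdsWithin 0 (Ioi 0))
      (nhds ((a - 1) * (-Real.log s) - Real.log (Real.Gamma (a + 1) * s))) := by
  have hq : Tendsto (fun x => (1 - Real.exp (-(s * x))) / x) (nhdsWithin 0 (Ioi 0)) (nhds s) := by
    have hd := u_hasDeriv s 0
    rw [hasDerivAt_iff_tendsto_slope] at hd
    have hmono : nhdsWithin (0:ℝ) (Ioi 0) ≤ nhdsWithin 0 {(0:ℝ)}ᶜ :=
      nhdsWithin_mono 0 (fun y hy => ne_of_gt (mem_Ioi.mp hy))
    have hd2 := hd.mono_left hmono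
    have heq : Tendsto (fun x => (1 - Real.exp (-(s * x))) / x) (nhdsWithin 0 (Ioi 0))
        (nhds (s * Real.exp (-(s * 0)))) := by
      refine hd2.congr' ?_
      filter_upwards [self_mem_nhdsWithin] with y hy
      simp [slope_def_field]
    simpa using heq
  have hlq : Tendsto (fun x => Real.log ((1 - Real.exp (-(s * x))) / x))
      (nhdsWithin 0 (Ioi 0)) (nhds (Real.log s)) := hq.log (ne_of_gt hs)
  have hlin : Tendsto (fun x : ℝ => (s - 1) * x) (nhdsWithin 0 (Ioi 0)) (nhds 0) := by
    have h0 : Tendsto (fun x : ℝ => (s - 1) * x) (nhds (0:ℝ)) (nhds ((s - 1) * 0)) :=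
      (continuous_const.mul continuous_id).tendsto 0
    simpa using h0.mono_left nhdsWithin_le_nhds
  have hmain := ((hlq.neg.const_mul (a - 1)).add hlin).sub_const
    (Real.log (Real.Gamma (a + 1) * s))
  have hev : (fun x => (a - 1) * (-(Real.log ((1 - Real.exp (-(s * x))) / x))) + (s - 1) * x
      - Real.log (Real.Gamma (a + 1) * s)) =ᶠ[nhdsWithin (0:ℝ) (Ioi 0)] psi a s := by
    filter_upwards [self_mem_nhdsWithin] with y hy
    have hy' : (0:ℝ) < y := mem_Ioi.mp hy
    have h2 := u_pos hs hy'
    unfold psi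
    rw [Real.log_div (ne_of_gt h2) (ne_of_gt hy')]
    ring
  have := hmain.congr' hev
  simpa using this

/-- single-crossing, case `a < 1`, `s = 1` -/
lemma cross_lt {a : ℝ} (ha : 0 < a) (ha1 : a < 1) :
    ∀ t y : ℝ, 0 < t → t < y → psi a 1 t ≤ 0 → psi a 1 y < 0 := by
  have hanti : StrictAntiOn (psi a 1) (Ioi 0) := by
    apply strictAntiOn_of_deriv_neg (convex_Ioi 0)
    · exact fun z hz => (psi_hasDeriv one_pos (mem_Ioi.mp hz)).continuousAt.continuousWithinAt
    · rw [interior_Ioi]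
      intro z hz
      rw [(psi_hasDeriv one_pos (mem_Ioi.mp hz)).deriv]
      exact DD_neg ha1 (mem_Ioi.mp hz)
  intro t y ht hty hpt
  have := hanti (mem_Ioi.mpr ht) (mem_Ioi.mpr (ht.trans hty)) hty
  linarith

/-- single-crossing, case `a > 1` -/
lemma cross_gt {a s : ℝ} (ha1 : 1 < a) (hs : 0 < s)
    (hlim : Tendsto (psi a s) (nhdsWithin 0 (Ioi 0)) (nhds 0)) :
    ∀ t y : ℝ, 0 < t → t < y → psi a s t ≤ 0 → psi a s y < 0 := by
  intro t y ht hty hpt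
  have step1 : ∃ c ∈ Ioo (0:ℝ) t, DD a s c ≤ 0 := by
    by_contra hcon
    push_neg at hcon
    have hmono : StrictMonoOn (psi a s) (Ioc 0 t) := by
      apply strictMonoOn_of_deriv_pos (convex_Ioc 0 t)
      · exact fun z hz => (psi_hasDeriv hs hz.1).continuousAt.continuousWithinAt
      · rw [interior_Ioc]
        intro z hz
        rw [(psi_hasDeriv hs hz.1).deriv]
        exact hcon z hz
    have hu : t / 2 ∈ Ioc (0:ℝ) t := ⟨half_pos ht, (half_le_self ht.le)⟩
    have hev : ∀ᶠ z in nhdsWithin (0:ℝ) (Ioi 0), psi a s z ≤ psi a s (t / 2) := by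
      filter_upwards [Ioo_mem_nhdsGT (half_pos ht)]
        with z hz
      exact (hmono ⟨hz.1, hz.2.le.trans hu.2⟩ hu hz.2).le
    have h0le : (0:ℝ) ≤ psi a s (t / 2) := le_of_tendsto hlim hev
    have hlt : psi a s (t / 2) < psi a s t :=
      hmono hu ⟨ht, le_refl t⟩ (half_lt_self ht)
    linarith
  obtain ⟨c, hc, hDc⟩ := step1
  have hanti : StrictAntiOn (psi a s) (Icc t y) := by
    apply strictAntiOn_of_deriv_neg (convex_Icc t y)
    · exact fun z hz => (psi_hasDeriv hs (ht.trans_le hz.1)).continuousAt.continuousWithinAt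
    · rw [interior_Icc]
      intro z hz
      rw [(psi_hasDeriv hs (ht.trans hz.1)).deriv]
      have : DD a s z < DD a s c :=
        DD_antiOn ha1 hs (mem_Ioi.mpr hc.1) (mem_Ioi.mpr (ht.trans hz.1)) (hc.2.trans hz.1)
      linarith
  have := hanti ⟨le_refl t, hty.le⟩ ⟨hty.le, le_refl y⟩ hty
  linarith

lemma G_tendsto {a s : ℝ} (ha : 0 < a) (hs : 0 < s) :
    Tendsto (GG a s) atTop (nhds 0) := by
  have h1 : Tendsto (ig a) atTop (nhds (Real.Gamma a)) := by
    have := intervalIntegral_tendsto_integral_Ioi 0 (f_integrableOn ha) tendsto_id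
    rw [integral_f ha] at this
    exact this
  have he : Tendsto (fun x : ℝ => Real.exp (-(s * x))) atTop (nhds 0) := by
    apply Real.tendsto_exp_atBot.comp
    exact tendsto_neg_atTop_atBot.comp (tendsto_id.const_mul_atTop hs)
  have hbase : Tendsto (fun x : ℝ => 1 - Real.exp (-(s * x))) atTop (nhds 1) := by
    simpa using (tendsto_const_nhds (x := (1:ℝ)) (f := atTop)).sub he
  have hpow : Tendsto (fun x : ℝ => (1 - Real.exp (-(s * x))) ^ a) atTop (nhds 1) := by
    have hc : ContinuousAt (fun z : ℝ => z ^ a) 1 :=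
      Real.continuousAt_rpow_const 1 a (Or.inl one_ne_zero)
    have := hc.tendsto.comp hbase
    simpa [Real.one_rpow, Function.comp_def] using this
  have h2 : Tendsto (ub a s) atTop (nhds (Real.Gamma a)) := by
    have := hpow.const_mul (Real.Gamma a)
    rw [mul_one] at this
    exact this
  have := h1.sub h2
  simp only [sub_self] at this
  exact this

lemma G_pos {a s x : ℝ} (ha : 0 < a) (hs : 0 < s)
    (hcross : ∀ t y : ℝ, 0 < t → t < y → psi a s t ≤ 0 → psi a s y < 0)
    (hx : 0 < x) :
    Real.Gamma a * (1 - Real.exp (-(s * x))) ^ a < ig a x := by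
  suffices h : 0 < GG a s x by
    unfold GG ub at h; linarith
  have hG0 : GG a s 0 = 0 := by
    unfold GG ig ub
    simp [Real.zero_rpow (ne_of_gt ha)]
  by_cases hall : ∀ t ∈ Ioc (0:ℝ) x, 0 < psi a s t
  · have hcont : ContinuousOn (GG a s) (Icc 0 x) := by
      apply ContinuousOn.sub
      · have hI : IntegrableOn (f a) (uIcc 0 x) := by
          rw [uIcc_of_le hx.le, integrableOn_Icc_iff_integrableOn_Ioc]
          exact (f_integrableOn ha).mono_set Ioc_subset_Ioi_self
        have := intervalIntegral.continuousOn_primitive_interval hI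
        rwa [uIcc_of_le hx.le] at this
      · apply Continuous.continuousOn
        apply continuous_const.mul
        apply Continuous.rpow_const
        · exact continuous_const.sub (Real.continuous_exp.comp (continuous_const.mul continuous_id).neg)
        · exact fun _ => Or.inr ha.le
    have hmono : StrictMonoOn (GG a s) (Icc 0 x) := by
      apply strictMonoOn_of_deriv_pos (convex_Icc 0 x) hcont
      rw [interior_Icc]
      intro z hz
      rw [(GG_hasDeriv ha hs hz.1).deriv]
      exact (gg_pos_iff ha hs hz.1).mpr (hall z ⟨hz.1, hz.2.le⟩)
    have := hmono (left_mem_Icc.mpr hx.le) (right_mem_Icc.mpr hx.le) hx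
    rwa [hG0] at this
  · push_neg at hall
    obtain ⟨t₁, ht₁, hpt⟩ := hall
    have hanti : StrictAntiOn (GG a s) (Ici x) := by
      apply strictAntiOn_of_deriv_neg (convex_Ici x)
      · exact fun z hz => (GG_hasDeriv ha hs (hx.trans_le hz)).continuousAt.continuousWithinAt
      · rw [interior_Ici]
        intro z hz
        rw [(GG_hasDeriv ha hs (hx.trans hz)).deriv]
        exact (gg_neg_iff ha hs (hx.trans hz)).mpr
          (hcross t₁ z ht₁.1 (ht₁.2.trans_lt hz) hpt)
    have h1 : (0:ℝ) ≤ GG a s (x + 1) := by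
      apply le_of_tendsto (G_tendsto ha hs)
      filter_upwards [eventually_gt_atTop (x + 1)] with z hz
      exact (hanti (mem_Ici.mpr (by linarith)) (mem_Ici.mpr (by linarith)) hz).le
    have h2 : GG a s (x + 1) < GG a s x :=
      hanti (mem_Ici.mpr le_rfl) (mem_Ici.mpr (by linarith)) (lt_add_one x)
    linarith

end AlzerAux

/-- Alzer's lower bound on the regularized lower incomplete gamma function:
for `a > 0`, `a ≠ 1` and `x > 0`, `(1 − e^{−s_a·x})^a < γ(a,x)/Γ(a)`, where
`s_a = 1` if `0 < a < 1` and `s_a = Γ(1+a)^{−1/a}` if `a > 1`. -/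
theorem alzer_incomplete_gamma_lower_bound
    (a x : ℝ) (ha : 0 < a) (hane : a ≠ 1) (hx : 0 < x) :
    (1 - Real.exp (-((if a < 1 then (1 : ℝ) else Real.Gamma (1 + a) ^ (-1 / a)) * x))) ^ a
      < (∫ t in (0 : ℝ)..x, t ^ (a - 1) * Real.exp (-t)) / Real.Gamma a := by
  have hΓa : 0 < Real.Gamma a := Real.Gamma_pos_of_pos ha
  rw [lt_div_iff₀ hΓa]
  rcases lt_or_gt_of_ne hane with h1 | h1
  · rw [if_pos h1]
    have key := AlzerAux.G_pos ha one_pos (AlzerAux.cross_lt ha h1) hx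
    unfold AlzerAux.ig AlzerAux.f at key
    linarith [mul_comm (Real.Gamma a) ((1 - Real.exp (-(1 * x))) ^ a)]
  · rw [if_neg (not_lt.mpr h1.le)]
    set s : ℝ := Real.Gamma (1 + a) ^ (-1 / a) with hsdef
    have hΓ1a : 0 < Real.Gamma (1 + a) := Real.Gamma_pos_of_pos (by linarith)
    have hs : 0 < s := Real.rpow_pos_of_pos hΓ1a _
    have hlim : Filter.Tendsto (AlzerAux.psi a s) (nhdsWithin 0 (Set.Ioi 0)) (nhds 0) := by
      have := AlzerAux.psi_tendsto (a := a) hs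
      have hval : (a - 1) * (-Real.log s) - Real.log (Real.Gamma (a + 1) * s) = 0 := by
        have hlogs : Real.log s = (-1 / a) * Real.log (Real.Gamma (1 + a)) :=
          Real.log_rpow hΓ1a _
        have hcomm : Real.Gamma (a + 1) = Real.Gamma (1 + a) := by rw [add_comm]
        rw [Real.log_mul (by rw [hcomm]; positivity) (ne_of_gt hs), hcomm, hlogs]
        field_simp
        ring
      rwa [hval] at this
    have key := AlzerAux.G_pos ha hs (AlzerAux.cross_gt h1 hs hlim) hx
    unfold AlzerAux.ig AlzerAux.f at key
    linarith [mul_comm (Real.Gamma a) ((1 - Real.exp (-(s * x))) ^ a)]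
end
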